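/- arXiv:2604.19271 — 7 statements merged into one kernel-verified Lean document; each statement's English description precedes it below -/
import Mathlib

section
/- Let S = {s_1, ..., s_n} be positive integers with total sum λ, let s_max = max_i s_i, and consider the W-TSP star instance with root v_0, leaves v_1,...,v_{n+1}, distances d(v_0,v_i)=s_i for i ≤ n and d(v_0,v_{n+1})=s_max, weights w_i = s_i for i ≤ n, w_{n+1}=s_max, w_0 = λ + s_max + 1, and cost-per-unit-distance function f(w) = 0 if w ≤ λ/2, f(w) = 1 if λ/2 < w ≤ λ + s_max, and f(w) = ∞ otherwise. If S can be partitioned into two subsets each summing to λ/2, then this W-TSP instance admits a tour of total cost at most s_max + λ. -/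
open ENNReal

/-- Construction of the tour permutation function. -/
lemma stmt3_perm_aux (n k : ℕ) (hn : 0 < n) (hk : k < n) (E1 E2 : ℕ → ℕ)
    (hE1lt : ∀ j, E1 j < n) (hE2lt : ∀ j, E2 j < n)
    (hE1inj : ∀ a b, a < k → b < k → E1 a = E1 b → a = b)
    (hE2inj : ∀ a b, a < n - k → b < n - k → E2 a = E2 b → a = b)
    (hE12 : ∀ a b, a < k → b < n - k → E1 a ≠ E2 b) :
    ∃ g : Fin (n + 2) → Fin (n + 2), Function.Injective g ∧ g 0 = 0 ∧
      (∀ (p : ℕ) (h1 : 0 < p) (h2 : p ≤ k) (hlt : p < n + 2),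
        (g ⟨p, hlt⟩).val = E1 (p - 1) + 1) ∧
      (∀ hlt : k + 1 < n + 2, (g ⟨k + 1, hlt⟩).val = n + 1) ∧
      (∀ (p : ℕ) (h1 : k + 1 < p) (hlt : p < n + 2),
        (g ⟨p, hlt⟩).val = E2 (p - k - 2) + 1) := by
  obtain ⟨g, hg0, hgA, hgB, hgC⟩ :
      ∃ g : Fin (n + 2) → Fin (n + 2),
        g 0 = 0 ∧
        (∀ (p : ℕ) (h1 : 0 < p) (h2 : p ≤ k) (hlt : p < n + 2),
          (g ⟨p, hlt⟩).val = E1 (p - 1) + 1) ∧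
        (∀ hlt : k + 1 < n + 2, (g ⟨k + 1, hlt⟩).val = n + 1) ∧
        (∀ (p : ℕ) (h1 : k + 1 < p) (hlt : p < n + 2),
          (g ⟨p, hlt⟩).val = E2 (p - k - 2) + 1) := by
    refine ⟨fun p =>
      if p.val = 0 then 0
      else if h2 : p.val ≤ k then
        ⟨E1 (p.val - 1) + 1, by have := hE1lt (p.val - 1); omega⟩
      else if h3 : p.val = k + 1 then ⟨n + 1, by omega⟩
      else ⟨E2 (p.val - k - 2) + 1, by have := hE2lt (p.val - k - 2); omega⟩,
      ?_, ?_, ?_, ?_⟩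
    · simp
    · intro p h1 h2 hlt
      dsimp only
      rw [if_neg (by omega), dif_pos h2]
    · intro hlt
      dsimp only
      rw [if_neg (by omega), dif_neg (by omega), dif_pos rfl]
    · intro p h1 hlt
      dsimp only
      rw [if_neg (by omega), dif_neg (by omega), dif_neg (by omega)]
  have hgval : ∀ p : Fin (n + 2), (g p).val =
      if p.val = 0 then 0
      else if p.val ≤ k then E1 (p.val - 1) + 1
      else if p.val = k + 1 then n + 1
      else E2 (p.val - k - 2) + 1 := by
    intro p
    have hp := p.isLt
    by_cases h0 : p.val = 0
    · rw [if_pos h0]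
      have : p = 0 := Fin.ext h0
      rw [this, hg0]
      rfl
    · by_cases hA : p.val ≤ k
      · rw [if_neg h0, if_pos hA]
        simpa using hgA p.val (by omega) hA hp
      · by_cases hB : p.val = k + 1
        · rw [if_neg h0, if_neg hA, if_pos hB]
          have : p = ⟨k + 1, by omega⟩ := Fin.ext hB
          rw [this]
          exact hgB (by omega)
        · rw [if_neg h0, if_neg hA, if_neg hB]
          simpa using hgC p.val (by omega) hp
  refine ⟨g, ?_, hg0, hgA, hgB, hgC⟩
  intro p q hpq
  have hv := congrArg Fin.val hpq
  rw [hgval p, hgval q] at hv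
  have hp := p.isLt
  have hq := q.isLt
  have l1 := hE1lt (p.val - 1); have l2 := hE1lt (q.val - 1)
  have l3 := hE2lt (p.val - k - 2); have l4 := hE2lt (q.val - k - 2)
  apply Fin.ext
  split_ifs at hv <;> try omega
  · have := hE1inj (p.val - 1) (q.val - 1) (by omega) (by omega) (by omega); omega
  · exact absurd (by omega) (hE12 (p.val - 1) (q.val - k - 2) (by omega) (by omega))
  · exact absurd (by omega) (hE12 (q.val - 1) (p.val - k - 2) (by omega) (by omega))
  · have := hE2inj (p.val - k - 2) (q.val - k - 2) (by omega) (by omega) (by omega)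
    omega

/-- Converting a sum over `Finset.Ioc 0 p` in `Fin (n+1)` to a sum over a `range`. -/
lemma stmt3_sum_aux (n : ℕ) [NeZero (n + 1)] (F : Fin (n + 1) → ℕ) (p : Fin (n + 1)) :
    ∑ j ∈ Finset.Ioc (0 : Fin (n + 1)) p, F j
      = ∑ x ∈ Finset.range p.val, (if h : x + 1 < n + 1 then F ⟨x + 1, h⟩ else 0) := by
  have hIocRange : ∀ (G : ℕ → ℕ) (c : ℕ),
      ∑ x ∈ Finset.Ioc 0 c, G x = ∑ j ∈ Finset.range c, G (j + 1) := by
    intro G c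
    induction c with
    | zero => simp
    | succ c ih => rw [Finset.sum_Ioc_succ_top (Nat.zero_le _), ih, Finset.sum_range_succ]
  have step1 : ∑ j ∈ Finset.Ioc (0 : Fin (n + 1)) p, F j
      = ∑ x ∈ Finset.Ioc ((0 : Fin (n + 1)).val) p.val,
          (if h : x < n + 1 then F ⟨x, h⟩ else 0) := by
    rw [← Fin.map_valEmbedding_Ioc, Finset.sum_map]
    refine Finset.sum_congr rfl fun x hx => ?_
    simp only [Fin.valEmbedding_apply]
    rw [dif_pos x.isLt]
  rw [Fin.val_zero] at step1
  rw [step1, hIocRange]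

/-- The arithmetic core: sums of distances along the tour. -/
lemma stmt3_nat_aux (k m lam smax A B : ℕ) (hm : 0 < m) (hsmax : 0 < smax)
    (DR : ℕ → ℕ)
    (hA : ∑ j ∈ Finset.range k, DR (j + 1) = A) (h2A : 2 * A = lam)
    (hB : ∑ t ∈ Finset.range m, DR (k + 1 + t + 1) = B) (hAB : A + B = lam)
    (hk1 : DR (k + 1) = smax) :
    (∀ c, c ≤ k → 2 * ∑ j ∈ Finset.range c, DR (j + 1) ≤ lam) ∧
    (∀ c, k + 1 ≤ c → c ≤ k + m + 1 →
      lam < 2 * ∑ j ∈ Finset.range c, DR (j + 1) ∧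
        ∑ j ∈ Finset.range c, DR (j + 1) ≤ lam + smax) ∧
    (∑ j ∈ Finset.range (k + m + 1), DR (j + 1) = lam + smax) ∧
    (DR (k + m + 1) + ∑ j ∈ Finset.Ico (k + 1) (k + m + 1), (DR j + DR (j + 1))
      ≤ smax + lam) := by
  have hQhigh : ∀ c, k + 1 ≤ c → c ≤ k + m + 1 →
      ∑ j ∈ Finset.range c, DR (j + 1)
        = A + smax + ∑ t ∈ Finset.range (c - (k + 1)), DR (k + 1 + t + 1) := by
    intro c h1 h2
    rw [← Finset.sum_range_add_sum_Ico _ h1, Finset.sum_range_succ, hA, hk1,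
      Finset.sum_Ico_eq_sum_range]
  have hBle : ∀ c, c ≤ m → ∑ t ∈ Finset.range c, DR (k + 1 + t + 1) ≤ B := by
    intro c hc
    rw [← hB]
    exact Finset.sum_le_sum_of_subset (Finset.range_subset_range.mpr hc)
  refine ⟨?_, ?_, ?_, ?_⟩
  · intro c hc
    have h1 : ∑ j ∈ Finset.range c, DR (j + 1) ≤ ∑ j ∈ Finset.range k, DR (j + 1) :=
      Finset.sum_le_sum_of_subset (Finset.range_subset_range.mpr hc)
    omega
  · intro c h1 h2
    have hQ := hQhigh c h1 h2
    have hle := hBle (c - (k + 1)) (by omega)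
    omega
  · rw [hQhigh (k + m + 1) (by omega) le_rfl,
      show k + m + 1 - (k + 1) = m from by omega, hB]
    omega
  · have hsplit : ∑ j ∈ Finset.Ico (k + 1) (k + m + 1), (DR j + DR (j + 1))
        = ∑ j ∈ Finset.Ico (k + 1) (k + m + 1), DR j
            + ∑ j ∈ Finset.Ico (k + 1) (k + m + 1), DR (j + 1) :=
      Finset.sum_add_distrib
    have hshift : ∑ j ∈ Finset.Ico (k + 1) (k + m + 1), DR (j + 1) = B := by
      rw [Finset.sum_Ico_eq_sum_range, show k + m + 1 - (k + 1) = m from by omega]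
      exact hB
    have hfirst : ∑ j ∈ Finset.Ico (k + 1) (k + m + 1), DR j + DR (k + m + 1)
        = smax + B := by
      rw [← Finset.sum_Ico_succ_top (by omega : k + 1 ≤ k + m + 1)]
      rw [Finset.sum_eq_sum_Ico_succ_bot (by omega : k + 1 < k + m + 1 + 1), hk1]
      congr 1
      rw [Finset.sum_Ico_eq_sum_range,
        show k + m + 1 + 1 - (k + 1 + 1) = m from by omega, ← hB]
      exact Finset.sum_congr rfl fun t _ => by
        rw [show k + 1 + 1 + t = k + 1 + t + 1 from by omega]
    omega

set_option maxHeartbeats 1000000 in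
/-- Forward direction of the NP-hardness reduction from Partition.
Nodes are `Fin (n+2)`: node `0` is the root `v_0`, node `⟨i+1,_⟩` is the leaf `v_{i+1}`
carrying integer `s i`, and node `⟨n+1,_⟩` is the extra leaf `v_{n+1}`.
`dr` gives the distance of each node to the root, and the star metric is
`d u v = dr u + dr v` for `u ≠ v`.  The tour is a bijection from positions to nodes;
its cost is `d(π_{n+2},π_1)·f(∑_{j=2}^{n+2} w_{π_j}) + ∑_{i=1}^{n+1} d(π_i,π_{i+1})·f(∑_{j=2}^{i} w_{π_j})`.
If the `s i` can be partitioned into two halves of equal sum, then some tour has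
cost at most `s_max + λ`. -/
theorem stmt_3 (n : ℕ) (hn : 0 < n) (s : Fin n → ℕ) (hs : ∀ i, 0 < s i)
    (lam smax : ℕ) (hlam : lam = ∑ i, s i) (hsmax : smax = Finset.univ.sup s)
    (w dr : Fin (n + 2) → ℕ)
    (hw0 : w 0 = lam + smax + 1)
    (hwleaf : ∀ i : Fin n, w ⟨i.val + 1, by have := i.isLt; omega⟩ = s i)
    (hwlast : w ⟨n + 1, by omega⟩ = smax)
    (hdr0 : dr 0 = 0)
    (hdrleaf : ∀ i : Fin n, dr ⟨i.val + 1, by have := i.isLt; omega⟩ = s i)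
    (hdrlast : dr ⟨n + 1, by omega⟩ = smax)
    (d : Fin (n + 2) → Fin (n + 2) → ℕ)
    (hd : ∀ u v, d u v = if u = v then 0 else dr u + dr v)
    (f : ℕ → ℝ≥0∞)
    (hf : ∀ y, f y = if 2 * y ≤ lam then 0 else if y ≤ lam + smax then 1 else ⊤)
    (S1 : Finset (Fin n)) (hpart : 2 * ∑ i ∈ S1, s i = lam) :
    ∃ π : Equiv.Perm (Fin (n + 2)),
      (d (π (Fin.last (n + 1))) (π 0) : ℝ≥0∞) *
          f (∑ j ∈ Finset.Ioc (0 : Fin (n + 2)) (Fin.last (n + 1)), w (π j)) +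
        ∑ i : Fin (n + 1),
          (d (π i.castSucc) (π i.succ) : ℝ≥0∞) *
            f (∑ j ∈ Finset.Ioc (0 : Fin (n + 2)) i.castSucc, w (π j)) ≤
      (smax : ℝ≥0∞) + (lam : ℝ≥0∞) := by
  classical
  -- basic positivity facts
  have hlampos : 0 < lam := by
    have h1 := hs ⟨0, hn⟩
    have h2 : s ⟨0, hn⟩ ≤ ∑ i, s i :=
      Finset.single_le_sum (fun i _ => Nat.zero_le _) (Finset.mem_univ _)
    omega
  have hsmaxpos : 0 < smax := by
    have h1 := hs ⟨0, hn⟩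
    have h2 : s ⟨0, hn⟩ ≤ Finset.univ.sup s := Finset.le_sup (Finset.mem_univ _)
    omega
  have hsum_compl : ∑ i ∈ S1, s i + ∑ i ∈ S1ᶜ, s i = lam := by
    rw [hlam]; exact Finset.sum_add_sum_compl S1 s
  have hkn : S1.card < n := by
    by_contra h
    have hcle : S1.card ≤ n := le_trans (Finset.card_le_univ S1) (by simp)
    have hcu : S1.card = Fintype.card (Fin n) := by simp; omega
    have : S1 = Finset.univ := Finset.eq_univ_of_card _ hcu
    rw [this, ← hlam] at hpart
    omega
  have hm : S1ᶜ.card = n - S1.card := by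
    rw [Finset.card_compl]; simp
  -- enumerations of S1 and its complement
  obtain ⟨e1, he1inj, he1mem, he1sum⟩ :
      ∃ e1 : Fin S1.card → Fin n, Function.Injective e1 ∧ (∀ j, e1 j ∈ S1) ∧
        ∑ j, s (e1 j) = ∑ i ∈ S1, s i := by
    refine ⟨fun j => (S1.orderIsoOfFin rfl j : Fin n), ?_, fun j => (S1.orderIsoOfFin rfl j).2, ?_⟩
    · intro a b hab
      exact (S1.orderIsoOfFin rfl).injective (Subtype.ext hab)
    · rw [← Finset.sum_coe_sort S1 s]
      exact Fintype.sum_equiv (S1.orderIsoOfFin rfl).toEquiv _ _ (fun j => rfl)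
  obtain ⟨e2, he2inj, he2mem, he2sum⟩ :
      ∃ e2 : Fin S1ᶜ.card → Fin n, Function.Injective e2 ∧ (∀ j, e2 j ∉ S1) ∧
        ∑ j, s (e2 j) = ∑ i ∈ S1ᶜ, s i := by
    refine ⟨fun j => (S1ᶜ.orderIsoOfFin rfl j : Fin n), ?_, fun j =>
      Finset.mem_compl.mp (S1ᶜ.orderIsoOfFin rfl j).2, ?_⟩
    · intro a b hab
      exact (S1ᶜ.orderIsoOfFin rfl).injective (Subtype.ext hab)
    · rw [← Finset.sum_coe_sort S1ᶜ s]
      exact Fintype.sum_equiv (S1ᶜ.orderIsoOfFin rfl).toEquiv _ _ (fun j => rfl)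
  -- totalized enumerations (kept opaque)
  obtain ⟨E1, hE1lt, hE1s⟩ :
      ∃ E1 : ℕ → ℕ, (∀ j, E1 j < n) ∧ ∀ j (h : j < S1.card), E1 j = (e1 ⟨j, h⟩).val := by
    refine ⟨fun j => if h : j < S1.card then (e1 ⟨j, h⟩).val else 0, fun j => ?_, fun j h => ?_⟩
    · dsimp only
      split
      · exact (e1 _).isLt
      · omega
    · dsimp only
      rw [dif_pos h]
  obtain ⟨E2, hE2lt, hE2s⟩ :
      ∃ E2 : ℕ → ℕ, (∀ j, E2 j < n) ∧ ∀ j (h : j < S1ᶜ.card), E2 j = (e2 ⟨j, h⟩).val := by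
    refine ⟨fun j => if h : j < S1ᶜ.card then (e2 ⟨j, h⟩).val else 0, fun j => ?_, fun j h => ?_⟩
    · dsimp only
      split
      · exact (e2 _).isLt
      · omega
    · dsimp only
      rw [dif_pos h]
  have hE1inj : ∀ a b, a < S1.card → b < S1.card → E1 a = E1 b → a = b := by
    intro a b ha hb hab
    rw [hE1s a ha, hE1s b hb] at hab
    have := he1inj (Fin.ext hab : e1 ⟨a, ha⟩ = e1 ⟨b, hb⟩)
    exact congrArg Fin.val this
  have hE2inj : ∀ a b, a < n - S1.card → b < n - S1.card → E2 a = E2 b → a = b := by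
    intro a b ha hb hab
    rw [hE2s a (by omega), hE2s b (by omega)] at hab
    have := he2inj (Fin.ext hab : e2 ⟨a, by omega⟩ = e2 ⟨b, by omega⟩)
    exact congrArg Fin.val this
  have hE12 : ∀ a b, a < S1.card → b < n - S1.card → E1 a ≠ E2 b := by
    intro a b ha hb hab
    rw [hE1s a ha, hE2s b (by omega)] at hab
    have : e1 ⟨a, ha⟩ = e2 ⟨b, by omega⟩ := Fin.ext hab
    exact he2mem ⟨b, by omega⟩ (this ▸ he1mem ⟨a, ha⟩)
  -- the tour
  obtain ⟨g, hginj, hg0, hgA, hgB, hgC⟩ :=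
    stmt3_perm_aux n S1.card hn hkn E1 E2 hE1lt hE2lt hE1inj hE2inj hE12
  -- distances-to-root along the tour, kept opaque
  obtain ⟨DR, hDRval⟩ :
      ∃ DR : ℕ → ℕ, ∀ (p : ℕ) (h : p < n + 2), DR p = dr (g ⟨p, h⟩) := by
    refine ⟨fun p => if h : p < n + 2 then dr (g ⟨p, h⟩) else 0, fun p h => ?_⟩
    dsimp only
    rw [dif_pos h]
  have hDRe1 : ∀ j (h : j < S1.card), DR (j + 1) = s (e1 ⟨j, h⟩) := by
    intro j h
    rw [hDRval (j + 1) (by omega)]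
    have hlt2 : (e1 ⟨j, h⟩).val + 1 < n + 2 := by have := (e1 ⟨j, h⟩).isLt; omega
    have hfin : g ⟨j + 1, by omega⟩ = ⟨(e1 ⟨j, h⟩).val + 1, hlt2⟩ := by
      apply Fin.ext
      rw [hgA (j + 1) (by omega) (by omega)]
      rw [show j + 1 - 1 = j from by omega, hE1s j h]
    rw [hfin]
    exact hdrleaf _
  have hDRk : DR (S1.card + 1) = smax := by
    rw [hDRval (S1.card + 1) (by omega)]
    have hfin : g ⟨S1.card + 1, by omega⟩ = ⟨n + 1, by omega⟩ := Fin.ext (hgB (by omega))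
    rw [hfin]
    exact hdrlast
  have hDRe2 : ∀ t (h : t < S1ᶜ.card), DR (S1.card + 1 + t + 1) = s (e2 ⟨t, h⟩) := by
    intro t h
    rw [hDRval (S1.card + 1 + t + 1) (by omega)]
    have hlt2 : (e2 ⟨t, h⟩).val + 1 < n + 2 := by have := (e2 ⟨t, h⟩).isLt; omega
    have hfin : g ⟨S1.card + 1 + t + 1, by omega⟩ = ⟨(e2 ⟨t, h⟩).val + 1, hlt2⟩ := by
      apply Fin.ext
      rw [hgC (S1.card + 1 + t + 1) (by omega)]
      rw [show S1.card + 1 + t + 1 - S1.card - 2 = t from by omega, hE2s t h]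
    rw [hfin]
    exact hdrleaf _
  -- weights equal distances off the root
  have hwDR : ∀ (p : ℕ) (h0 : 0 < p) (hlt : p < n + 2), w (g ⟨p, hlt⟩) = DR p := by
    intro p h0 hlt
    rw [hDRval p hlt]
    rcases lt_trichotomy p (S1.card + 1) with hc | hc | hc
    · have hp1 : p - 1 < S1.card := by omega
      have hlt2 : (e1 ⟨p - 1, hp1⟩).val + 1 < n + 2 := by have := (e1 ⟨p - 1, hp1⟩).isLt; omega
      have hfin : g ⟨p, hlt⟩ = ⟨(e1 ⟨p - 1, hp1⟩).val + 1, hlt2⟩ := by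
        apply Fin.ext
        rw [hgA p h0 (by omega), hE1s (p - 1) hp1]
      rw [hfin, hwleaf, hdrleaf]
    · subst hc
      have hfin : g ⟨S1.card + 1, hlt⟩ = ⟨n + 1, by omega⟩ := Fin.ext (hgB hlt)
      rw [hfin, hwlast, hdrlast]
    · have hp2 : p - S1.card - 2 < S1ᶜ.card := by omega
      have hlt2 : (e2 ⟨p - S1.card - 2, hp2⟩).val + 1 < n + 2 := by
        have := (e2 ⟨p - S1.card - 2, hp2⟩).isLt; omega
      have hfin : g ⟨p, hlt⟩ = ⟨(e2 ⟨p - S1.card - 2, hp2⟩).val + 1, hlt2⟩ := by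
        apply Fin.ext
        rw [hgC p hc, hE2s (p - S1.card - 2) hp2]
      rw [hfin, hwleaf, hdrleaf]
  -- prefix sums
  have hpre : ∀ p : Fin (n + 2),
      ∑ j ∈ Finset.Ioc (0 : Fin (n + 2)) p, w (g j) = ∑ j ∈ Finset.range p.val, DR (j + 1) := by
    intro p
    rw [stmt3_sum_aux (n + 1) (fun j => w (g j)) p]
    refine Finset.sum_congr rfl fun j hj => ?_
    have hjlt : j + 1 < n + 2 := by
      have := Finset.mem_range.mp hj
      have := p.isLt
      omega
    rw [dif_pos hjlt, hwDR (j + 1) (by omega) hjlt]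
  -- partial sum values
  have hsum1 : ∑ j ∈ Finset.range S1.card, DR (j + 1) = ∑ i ∈ S1, s i := by
    rw [← Fin.sum_univ_eq_sum_range (fun j => DR (j + 1)) S1.card, ← he1sum]
    exact Finset.sum_congr rfl fun j _ => by rw [hDRe1 j.val j.isLt, Fin.eta]
  have hsum2eq : ∑ t ∈ Finset.range S1ᶜ.card, DR (S1.card + 1 + t + 1) = ∑ i ∈ S1ᶜ, s i := by
    rw [← Fin.sum_univ_eq_sum_range (fun t => DR (S1.card + 1 + t + 1)) S1ᶜ.card, ← he2sum]
    exact Finset.sum_congr rfl fun t _ => by rw [hDRe2 t.val t.isLt, Fin.eta]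
  -- the arithmetic core
  obtain ⟨c1, c2, c3, c4⟩ :=
    stmt3_nat_aux S1.card S1ᶜ.card lam smax (∑ i ∈ S1, s i) (∑ i ∈ S1ᶜ, s i)
      (by omega) hsmaxpos DR hsum1 hpart hsum2eq hsum_compl hDRk
  have hkm : S1.card + S1ᶜ.card = n := by omega
  rw [hkm] at c2 c3 c4
  -- build the permutation
  refine ⟨Equiv.ofBijective g (Finite.injective_iff_bijective.mp hginj), ?_⟩
  simp only [Equiv.ofBijective_apply]
  -- wrap-around term
  have hlastval : (Fin.last (n + 1) : Fin (n + 2)).val = n + 1 := rfl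
  have hwrapsum : ∑ j ∈ Finset.Ioc (0 : Fin (n + 2)) (Fin.last (n + 1)), w (g j) = lam + smax := by
    rw [hpre, hlastval, c3]
  have hfwrap : f (lam + smax) = 1 := by
    rw [hf, if_neg (by omega), if_pos le_rfl]
  have hdlast : d (g (Fin.last (n + 1))) (g 0) = DR (n + 1) := by
    have hne : g (Fin.last (n + 1)) ≠ g 0 := by
      intro hc
      have := congrArg Fin.val (hginj hc)
      rw [hlastval] at this
      simp at this
    rw [hd, if_neg hne, hg0, hdr0]
    have : dr (g (Fin.last (n + 1))) = DR (n + 1) := by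
      rw [hDRval (n + 1) (by omega)]
      exact congrArg dr (congrArg g (Fin.ext rfl))
    omega
  -- per-edge terms
  have hterm : ∀ i : Fin (n + 1),
      (d (g i.castSucc) (g i.succ) : ℝ≥0∞) *
          f (∑ j ∈ Finset.Ioc (0 : Fin (n + 2)) i.castSucc, w (g j))
        = ((if S1.card + 1 ≤ i.val then DR i.val + DR (i.val + 1) else 0 : ℕ) : ℝ≥0∞) := by
    intro i
    have hcv : (i.castSucc : Fin (n + 2)).val = i.val := rfl
    rw [hpre i.castSucc, hcv]
    by_cases hc : S1.card + 1 ≤ i.val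
    · rw [if_pos hc]
      obtain ⟨hgt, hle⟩ := c2 i.val hc (by have := i.isLt; omega)
      have hf1 : f (∑ j ∈ Finset.range i.val, DR (j + 1)) = 1 := by
        rw [hf, if_neg (by omega), if_pos hle]
      rw [hf1, mul_one]
      have hne : g i.castSucc ≠ g i.succ := by
        intro hcc
        have := congrArg Fin.val (hginj hcc)
        rw [hcv, Fin.val_succ] at this
        omega
      rw [hd, if_neg hne]
      have h1 : dr (g i.castSucc) = DR i.val := by
        rw [hDRval i.val (by have := i.isLt; omega)]
        exact congrArg dr (congrArg g (Fin.ext rfl))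
      have h2 : dr (g i.succ) = DR (i.val + 1) := by
        rw [hDRval (i.val + 1) (by have := i.isLt; omega)]
        exact congrArg dr (congrArg g (Fin.ext rfl))
      rw [h1, h2]
    · rw [if_neg hc]
      have hf0 : f (∑ j ∈ Finset.range i.val, DR (j + 1)) = 0 := by
        rw [hf, if_pos (c1 i.val (by omega))]
      rw [hf0, mul_zero]
      simp
  -- assemble
  rw [hwrapsum, hfwrap, mul_one, hdlast]
  rw [Finset.sum_congr rfl fun i _ => hterm i]
  rw [← Nat.cast_sum]
  rw [← Nat.cast_add]
  have hnat : DR (n + 1) + ∑ i : Fin (n + 1),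
      (if S1.card + 1 ≤ i.val then DR i.val + DR (i.val + 1) else 0) ≤ smax + lam := by
    have hCsum : ∑ i : Fin (n + 1), (if S1.card + 1 ≤ i.val then DR i.val + DR (i.val + 1) else 0)
        = ∑ j ∈ Finset.Ico (S1.card + 1) (n + 1), (DR j + DR (j + 1)) := by
      rw [Fin.sum_univ_eq_sum_range (fun j => if S1.card + 1 ≤ j then DR j + DR (j + 1) else 0)
        (n + 1), ← Finset.sum_filter]
      congr 1
      ext x
      simp only [Finset.mem_filter, Finset.mem_range, Finset.mem_Ico]
      omega
    rw [hCsum]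
    exact c4
  exact_mod_cast hnat
end

section
/- Let S = {s_1, ..., s_n} be positive integers with sum λ, s_max = max_i s_i. In the star W-TSP instance from the Partition reduction, if some subset S_1 ⊆ S with sum X ≤ λ/2 is visited first (cost 0), then node v_{n+1} (of weight s_max) is visited, then the rest, the remaining traversal cost is s_max + 2(λ − X), and this quantity is at most s_max + λ if and only if X = λ/2. -/
/-- Quantitative core of the backward direction of the Partition reduction:
if a subset `S1` of total weight `X ≤ λ/2` is visited first at cost `0`, then
`v_{n+1}` (distance `s_max`, reached one-way) and afterwards the remaining leaves
(round trips at cost `1` per unit distance), the remaining traversal cost equals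
`s_max + 2(λ − X)`, and this is at most `s_max + λ` iff `X = λ/2`. -/
theorem stmt_4 (n : ℕ) (s : Fin n → ℝ) (hs : ∀ i, 0 < s i)
    (lam smax : ℝ) (hlam : lam = ∑ i, s i) (hsmax : 0 < smax)
    (S1 : Finset (Fin n)) (X : ℝ) (hX : X = ∑ i ∈ S1, s i) (hXhalf : X ≤ lam / 2) :
    smax + (∑ i ∈ Finset.univ \ S1, 2 * s i) = smax + 2 * (lam - X) ∧
      (smax + 2 * (lam - X) ≤ smax + lam ↔ X = lam / 2) := by
  have hsum : ∑ i ∈ Finset.univ \ S1, s i = lam - X := by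
    have := Finset.sum_sdiff (f := s) (Finset.subset_univ S1)
    rw [hlam, hX]; linarith
  constructor
  · rw [← Finset.mul_sum, hsum]
  · constructor
    · intro h; linarith
    · intro h; linarith
end

section
/- In the W-TSP on a path metric with a fixed starting node, there exists an optimal tour π such that for all indices i < j < k (with respect to the left-to-right order of nodes on the path), the tour visits node v_i or node v_k before visiting node v_j. -/
/-- Cost of a W-TSP tour `π` (a bijection from positions to nodes) on the path metric:
nodes `Fin (n+1)` lie on a line at coordinates `x`, node weights `w`, cost-per-unit-distance
`f` of the accumulated weight (the start node's weight is collected last). -/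
noncomputable def pathTourCost (n : ℕ) (x w : Fin (n + 1) → ℝ) (f : ℝ → ℝ)
    (π : Equiv.Perm (Fin (n + 1))) : ℝ :=
  (∑ i : Fin n, f (∑ j ∈ Finset.Ioc (0 : Fin (n + 1)) i.castSucc, w (π j)) *
      |x (π i.castSucc) - x (π i.succ)|) +
    f (∑ j ∈ Finset.Ioc (0 : Fin (n + 1)) (Fin.last n), w (π j)) *
      |x (π (Fin.last n)) - x (π 0)|

namespace Stmt6

open Finset

open Fin.NatCast

attribute [local instance] Classical.propDecidable

variable {n : ℕ}

/-! ### ℕ-indexed cost -/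

noncomputable def V (w : Fin (n+1) → ℝ) (g : ℕ → Fin (n+1)) (i : ℕ) : ℝ :=
  ∑ j ∈ Finset.Icc 1 i, w (g j)

noncomputable def term (x w : Fin (n+1) → ℝ) (f : ℝ → ℝ) (g : ℕ → Fin (n+1)) (i : ℕ) : ℝ :=
  f (V w g i) * |x (g i) - x (g (i+1))|

noncomputable def costN (n : ℕ) (x w : Fin (n+1) → ℝ) (f : ℝ → ℝ) (g : ℕ → Fin (n+1)) : ℝ :=
  (∑ i ∈ Finset.range n, term x w f g i) + f (V w g n) * |x (g n) - x (g 0)|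

lemma sum_Ioc_fin (n : ℕ) (w : Fin (n+1) → ℝ) (σ : Equiv.Perm (Fin (n+1))) (m : Fin (n+1)) :
    ∑ j ∈ Finset.Ioc (0 : Fin (n + 1)) m, w (σ j)
      = ∑ j ∈ Finset.Icc 1 (m : ℕ), w (σ (j : Fin (n+1))) := by
  have h1 : Finset.Icc 1 (m : ℕ) = Finset.Ioc 0 (m : ℕ) := by
    ext j; simp [Nat.lt_iff_add_one_le]
  rw [h1]
  change _ = ∑ j ∈ Finset.Ioc ((0 : Fin (n+1)) : ℕ) (m : ℕ), _
  rw [← Fin.map_valEmbedding_Ioc,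
    Finset.sum_map]
  apply Finset.sum_congr rfl
  intro j _
  simp [Fin.cast_val_eq_self]

lemma pathTourCost_eq_costN (n : ℕ) (x w : Fin (n+1) → ℝ) (f : ℝ → ℝ)
    (σ : Equiv.Perm (Fin (n+1))) :
    pathTourCost n x w f σ = costN n x w f (fun i => σ (i : Fin (n+1))) := by
  unfold pathTourCost costN term V
  congr 1
  · rw [← Fin.sum_univ_eq_sum_range]
    apply Finset.sum_congr rfl
    intro i _
    have hc : ((i : ℕ) : Fin (n+1)) = i.castSucc := by
      ext; simp [Fin.val_cast_of_lt (Nat.lt_succ_of_lt i.isLt)]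
    have hs : (Nat.cast ((i : ℕ) + 1) : Fin (n+1)) = i.succ := by
      ext; simp [Fin.val_cast_of_lt (Nat.succ_lt_succ i.isLt)]
    rw [sum_Ioc_fin, Fin.coe_castSucc]
    simp only [hc, hs]
  · have hl : ((n : ℕ) : Fin (n+1)) = Fin.last n := by
      ext; simp [Fin.val_cast_of_lt (Nat.lt_succ_self n)]
    have h0 : ((0 : ℕ) : Fin (n+1)) = 0 := by simp
    rw [sum_Ioc_fin]
    simp [hl, h0, Fin.val_last]

/-! ### The key cost comparison -/

lemma costN_le {x w : Fin (n+1) → ℝ} {f : ℝ → ℝ}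
    (hw : ∀ v, 0 ≤ w v) (hf : Monotone f) (hf0 : ∀ y, 0 ≤ f y)
    (g g' : ℕ → Fin (n+1)) (p q : ℕ)
    (hp : 1 ≤ p) (hpq : p < q) (hq : q + 1 ≤ n)
    (hg'lt : ∀ i, i < p → g' i = g i)
    (hg'mid : ∀ i, p ≤ i → i < q → g' i = g (i+1))
    (hg'q : g' q = g p)
    (hg'gt : ∀ i, q < i → i ≤ n → g' i = g i)
    (hbet : |x (g q) - x (g (q+1))| = |x (g q) - x (g p)| + |x (g p) - x (g (q+1))|) :
    costN n x w f g' ≤ costN n x w f g := by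
  have hVlo : ∀ i, i < p → V w g' i = V w g i := by
    intro i hi
    apply Finset.sum_congr rfl
    intro j hj
    rw [Finset.mem_Icc] at hj
    rw [hg'lt j (by omega)]
  have hVmid : ∀ i, p ≤ i → i ≤ q - 1 → V w g' i = V w g (i+1) - w (g p) := by
    intro i hpi hiq
    have h1 : V w g' i = (∑ j ∈ Ico 1 p, w (g j)) + ∑ k ∈ range (i+1-p), w (g (p+k+1)) := by
      unfold V
      rw [← Finset.Ico_add_one_right_eq_Icc, ← Finset.sum_Ico_consecutive _ (by omega : 1 ≤ p) (by omega : p ≤ i+1)]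
      congr 1
      · exact Finset.sum_congr rfl fun j hj => by
          rw [Finset.mem_Ico] at hj; rw [hg'lt j (by omega)]
      · rw [Finset.sum_Ico_eq_sum_range]
        exact Finset.sum_congr rfl fun k hk => by
          rw [Finset.mem_range] at hk
          rw [hg'mid (p+k) (by omega) (by omega)]
    have h2 : V w g (i+1) = ((∑ j ∈ Ico 1 p, w (g j)) + w (g p)) + ∑ k ∈ range (i+1-p), w (g (p+k+1)) := by
      unfold V
      rw [← Finset.Ico_add_one_right_eq_Icc, show i + 1 + 1 = i + 2 from rfl, ← Finset.sum_Ico_consecutive _ (by omega : 1 ≤ p+1) (by omega : p+1 ≤ i+2)]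
      congr 1
      · rw [← Finset.sum_Ico_consecutive _ (by omega : 1 ≤ p) (by omega : p ≤ p+1)]
        congr 1
        rw [Finset.sum_Ico_eq_sum_range]
        simp
      · rw [Finset.sum_Ico_eq_sum_range]
        have : i + 2 - (p+1) = i + 1 - p := by omega
        rw [this]
        exact Finset.sum_congr rfl fun k hk => by rw [show p+1+k = p+k+1 from by omega]
    rw [h1, h2]; ring
  have hVq : V w g' q = V w g q := by
    have h1 : V w g' q = V w g' (q-1) + w (g' q) := by
      unfold V
      have hq1 : q = (q-1) + 1 := by omega
      rw [hq1, Finset.sum_Icc_succ_top (by omega)]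
      rw [← hq1]
    rw [h1, hVmid (q-1) (by omega) (by omega), hg'q]
    have hq1 : q - 1 + 1 = q := by omega
    rw [hq1]; ring
  have hVhi : ∀ i, q ≤ i → i ≤ n → V w g' i = V w g i := by
    intro i hi hin
    have key : ∀ h : ℕ → Fin (n+1), ∑ j ∈ Finset.Icc 1 i, w (h j)
        = (∑ j ∈ Finset.Icc 1 q, w (h j)) + ∑ j ∈ Ico (q+1) (i+1), w (h j) := by
      intro h
      rw [← Finset.Ico_add_one_right_eq_Icc,
        ← Finset.sum_Ico_consecutive _ (by omega : 1 ≤ q+1) (by omega : q+1 ≤ i+1),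
        show Ico 1 (q+1) = Finset.Icc 1 q from Finset.Ico_add_one_right_eq_Icc 1 q]
    have t1 : ∑ j ∈ Ico (q+1) (i+1), w (g' j) = ∑ j ∈ Ico (q+1) (i+1), w (g j) :=
      Finset.sum_congr rfl fun j hj => by
        rw [Finset.mem_Ico] at hj; rw [hg'gt j (by omega) (by omega)]
    have t2 := hVq
    unfold V at t2 ⊢
    rw [key g', key g, t1, t2]
  have hVmono : ∀ i, V w g i ≤ V w g (i+1) := by
    intro i
    unfold V
    rw [Finset.sum_Icc_succ_top (by omega)]
    have := hw (g (i+1)); linarith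
  have hsplit : ∀ h : ℕ → ℝ, ∑ i ∈ range n, h i =
      ((((∑ i ∈ Ico 0 (p-1), h i) + ∑ i ∈ Ico (p-1) (p+1), h i) + ∑ i ∈ Ico (p+1) q, h i)
        + ∑ i ∈ Ico q (q+1), h i) + ∑ i ∈ Ico (q+1) n, h i := by
    intro h
    rw [Finset.range_eq_Ico,
      ← Finset.sum_Ico_consecutive h (by omega : (0:ℕ) ≤ q+1) (by omega : q+1 ≤ n),
      ← Finset.sum_Ico_consecutive h (by omega : (0:ℕ) ≤ q) (by omega : q ≤ q+1),
      ← Finset.sum_Ico_consecutive h (by omega : (0:ℕ) ≤ p+1) (by omega : p+1 ≤ q),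
      ← Finset.sum_Ico_consecutive h (by omega : (0:ℕ) ≤ p-1) (by omega : p-1 ≤ p+1)]
  have hsplit' : ∀ h : ℕ → ℝ, ∑ i ∈ range n, h i =
      ((((∑ i ∈ Ico 0 (p-1), h i) + ∑ i ∈ Ico (p-1) p, h i) + ∑ i ∈ Ico p (q-1), h i)
        + ∑ i ∈ Ico (q-1) (q+1), h i) + ∑ i ∈ Ico (q+1) n, h i := by
    intro h
    rw [Finset.range_eq_Ico,
      ← Finset.sum_Ico_consecutive h (by omega : (0:ℕ) ≤ q+1) (by omega : q+1 ≤ n),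
      ← Finset.sum_Ico_consecutive h (by omega : (0:ℕ) ≤ q-1) (by omega : q-1 ≤ q+1),
      ← Finset.sum_Ico_consecutive h (by omega : (0:ℕ) ≤ p) (by omega : p ≤ q-1),
      ← Finset.sum_Ico_consecutive h (by omega : (0:ℕ) ≤ p-1) (by omega : p-1 ≤ p)]
  have hA : ∑ i ∈ Ico 0 (p-1), term x w f g' i = ∑ i ∈ Ico 0 (p-1), term x w f g i := by
    apply Finset.sum_congr rfl
    intro i hi
    rw [Finset.mem_Ico] at hi
    unfold term
    rw [hVlo i (by omega), hg'lt i (by omega), hg'lt (i+1) (by omega)]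
  have hB : ∑ i ∈ Ico (p-1) p, term x w f g' i ≤ ∑ i ∈ Ico (p-1) (p+1), term x w f g i := by
    have e1 : Ico (p-1) p = {p-1} := by
      have : p = (p-1)+1 := by omega
      rw [this, Finset.Ico_add_one_right_eq_Icc, ← this, Finset.Icc_self]
    have e2 : ∑ i ∈ Ico (p-1) (p+1), term x w f g i = term x w f g (p-1) + term x w f g p := by
      rw [show p + 1 = (p-1) + 1 + 1 by omega, Finset.Ico_add_one_right_eq_Icc,
        Finset.sum_Icc_succ_top (by omega), show p - 1 + 1 = p by omega, Finset.Icc_self,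
        Finset.sum_singleton]
    rw [e1, Finset.sum_singleton, e2]
    unfold term
    rw [hVlo (p-1) (by omega), hg'lt (p-1) (by omega),
      show p - 1 + 1 = p by omega, hg'mid p (le_refl p) (by omega)]
    have tri : |x (g (p-1)) - x (g (p+1))| ≤ |x (g (p-1)) - x (g p)| + |x (g p) - x (g (p+1))| :=
      abs_sub_le _ _ _
    have hfm : f (V w g (p-1)) ≤ f (V w g p) := by
      apply hf
      have := hVmono (p-1)
      rw [show p - 1 + 1 = p by omega] at this
      exact this
    have h0 := hf0 (V w g (p-1))
    have h1 := abs_nonneg (x (g (p-1)) - x (g p))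
    have h2 := abs_nonneg (x (g p) - x (g (p+1)))
    nlinarith
  have hC : ∑ i ∈ Ico p (q-1), term x w f g' i ≤ ∑ i ∈ Ico (p+1) q, term x w f g i := by
    rw [Finset.sum_Ico_eq_sum_range, Finset.sum_Ico_eq_sum_range,
      show q - (p+1) = q - 1 - p by omega]
    apply Finset.sum_le_sum
    intro k hk
    rw [Finset.mem_range] at hk
    unfold term
    rw [hVmid (p+k) (by omega) (by omega), hg'mid (p+k) (by omega) (by omega),
      hg'mid (p+k+1) (by omega) (by omega)]
    have hfm : f (V w g (p+k+1) - w (g p)) ≤ f (V w g (p+k+1)) := by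
      apply hf; have := hw (g p); linarith
    have h2 := abs_nonneg (x (g (p+k+1)) - x (g (p+k+1+1)))
    have e3 : p + 1 + k = p + k + 1 := by omega
    rw [e3]
    exact mul_le_mul_of_nonneg_right hfm h2
  have hD : ∑ i ∈ Ico (q-1) (q+1), term x w f g' i ≤ ∑ i ∈ Ico q (q+1), term x w f g i := by
    have e1 : ∑ i ∈ Ico (q-1) (q+1), term x w f g' i
        = term x w f g' (q-1) + term x w f g' q := by
      rw [show q + 1 = (q-1) + 1 + 1 by omega, Finset.Ico_add_one_right_eq_Icc,
        Finset.sum_Icc_succ_top (by omega), show q - 1 + 1 = q by omega,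
        show Finset.Icc (q-1) (q-1) = {q-1} from Finset.Icc_self _, Finset.sum_singleton]
    have e2 : ∑ i ∈ Ico q (q+1), term x w f g i = term x w f g q := by
      rw [Finset.Ico_add_one_right_eq_Icc, Finset.Icc_self, Finset.sum_singleton]
    rw [e1, e2]
    unfold term
    rw [hVmid (q-1) (by omega) (by omega), show q - 1 + 1 = q by omega, hVq,
      hg'mid (q-1) (by omega) (by omega), show q - 1 + 1 = q by omega, hg'q,
      hg'gt (q+1) (by omega) (by omega)]
    have hfm : f (V w g q - w (g p)) ≤ f (V w g q) := by
      apply hf; have := hw (g p); linarith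
    have h1 := abs_nonneg (x (g q) - x (g p))
    have h2 := abs_nonneg (x (g p) - x (g (q+1)))
    have h0 := hf0 (V w g q)
    rw [hbet]
    nlinarith
  have hE : ∑ i ∈ Ico (q+1) n, term x w f g' i = ∑ i ∈ Ico (q+1) n, term x w f g i := by
    apply Finset.sum_congr rfl
    intro i hi
    rw [Finset.mem_Ico] at hi
    unfold term
    rw [hVhi i (by omega) (by omega), hg'gt i (by omega) (by omega),
      hg'gt (i+1) (by omega) (by omega)]
  have hwrap : f (V w g' n) * |x (g' n) - x (g' 0)| = f (V w g n) * |x (g n) - x (g 0)| := by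
    rw [hVhi n (by omega) (by omega), hg'gt n (by omega) (by omega), hg'lt 0 (by omega)]
  unfold costN
  rw [hsplit' (term x w f g'), hsplit (term x w f g), hwrap]
  have := hA; have := hB; have := hC; have := hD; have := hE
  linarith

/-! ### The cyclic-shift permutation -/

def cf (p q : Fin (n+1)) (i : Fin (n+1)) : Fin (n+1) :=
  if h : (i:ℕ) < (p:ℕ) ∨ (q:ℕ) < (i:ℕ) then i
  else if h2 : (i:ℕ) = (q:ℕ) then p
  else ⟨(i:ℕ)+1, by have := q.isLt; omega⟩

def ci (p q : Fin (n+1)) (i : Fin (n+1)) : Fin (n+1) :=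
  if (i:ℕ) < (p:ℕ) ∨ (q:ℕ) < (i:ℕ) then i
  else if (i:ℕ) = (p:ℕ) then q
  else ⟨(i:ℕ)-1, by omega⟩

lemma cf_val (p q i : Fin (n+1)) :
    (cf p q i : ℕ) = if (i:ℕ) < (p:ℕ) ∨ (q:ℕ) < (i:ℕ) then (i:ℕ)
      else if (i:ℕ) = (q:ℕ) then (p:ℕ) else (i:ℕ)+1 := by
  unfold cf; split_ifs <;> simp_all

lemma ci_val (p q i : Fin (n+1)) :
    (ci p q i : ℕ) = if (i:ℕ) < (p:ℕ) ∨ (q:ℕ) < (i:ℕ) then (i:ℕ)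
      else if (i:ℕ) = (p:ℕ) then (q:ℕ) else (i:ℕ)-1 := by
  unfold ci; split_ifs <;> simp_all

def cyc (p q : Fin (n+1)) : Equiv.Perm (Fin (n+1)) where
  toFun := cf p q
  invFun := ci p q
  left_inv := by
    intro i
    have hp := p.isLt; have hq := q.isLt; have hi := i.isLt
    apply Fin.ext
    rw [ci_val, cf_val]
    split_ifs <;> omega
  right_inv := by
    intro i
    have hp := p.isLt; have hq := q.isLt; have hi := i.isLt
    apply Fin.ext
    rw [cf_val, ci_val]
    split_ifs <;> omega

lemma cyc_val (p q i : Fin (n+1)) :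
    ((cyc p q) i : ℕ) = if (i:ℕ) < (p:ℕ) ∨ (q:ℕ) < (i:ℕ) then (i:ℕ)
      else if (i:ℕ) = (q:ℕ) then (p:ℕ) else (i:ℕ)+1 := cf_val p q i

lemma cyc_symm_val (p q i : Fin (n+1)) :
    ((cyc p q).symm i : ℕ) = if (i:ℕ) < (p:ℕ) ∨ (q:ℕ) < (i:ℕ) then (i:ℕ)
      else if (i:ℕ) = (p:ℕ) then (q:ℕ) else (i:ℕ)-1 := ci_val p q i

/-! ### Premature visits -/

def premP (t : Fin (n+1)) (σ : Equiv.Perm (Fin (n+1))) (v : Fin (n+1)) : Prop :=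
  v ≠ t ∧ ∃ a c : Fin (n+1), a < v ∧ v < c ∧
    ((σ.symm v : ℕ) < (σ.symm a : ℕ)) ∧ ((σ.symm v : ℕ) < (σ.symm c : ℕ))

noncomputable def Om (t : Fin (n+1)) (σ : Equiv.Perm (Fin (n+1))) : ℕ :=
  ∑ v ∈ Finset.univ.filter (fun v => premP t σ v), (n - (σ.symm v : ℕ))

lemma abs_between {u m v : ℝ} (h1 : u ≤ m) (h2 : m ≤ v) : |u - v| = |u - m| + |m - v| := by
  rw [abs_of_nonpos (by linarith), abs_of_nonpos (by linarith), abs_of_nonpos (by linarith)]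
  ring

lemma abs_between' {u m v : ℝ} (h1 : v ≤ m) (h2 : m ≤ u) : |u - v| = |u - m| + |m - v| := by
  rw [abs_of_nonneg (by linarith), abs_of_nonneg (by linarith), abs_of_nonneg (by linarith)]
  ring

section Repair

variable {x w : Fin (n+1) → ℝ} {f : ℝ → ℝ} {t : Fin (n+1)} {σ : Equiv.Perm (Fin (n+1))}

set_option maxHeartbeats 2000000 in
lemma repair (hx : Monotone x) (hw : ∀ v, 0 ≤ w v) (hf : Monotone f) (hf0 : ∀ y, 0 ≤ f y)
    (hσ0 : σ 0 = t) (b : Fin (n+1)) (hb : premP t σ b)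
    (hmax : ∀ v, premP t σ v → (σ.symm v : ℕ) ≤ (σ.symm b : ℕ)) :
    ∃ σ' : Equiv.Perm (Fin (n+1)), σ' 0 = t ∧
      pathTourCost n x w f σ' ≤ pathTourCost n x w f σ ∧ Om t σ' < Om t σ := by
  obtain ⟨hbt, a, c, hab, hbc, hpa, hpc⟩ := hb
  set p : Fin (n+1) := σ.symm b with hpdef
  have hp1 : 1 ≤ (p : ℕ) := by
    rcases Nat.eq_zero_or_pos (p : ℕ) with h | h
    case inr => omega
    · exfalso
      apply hbt
      have : p = 0 := Fin.ext (by simpa using h)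
      rw [← hσ0, ← this]
      exact (Equiv.apply_symm_apply σ b).symm
  have hac : a ≠ c := by intro h; rw [h] at hab; exact absurd (hab.trans hbc) (lt_irrefl c)
  have hpac : σ.symm a ≠ σ.symm c := fun h => hac (σ.symm.injective h)
  have hpn : (p : ℕ) + 2 ≤ n + 1 := by
    have h1 : ((σ.symm a : Fin (n+1)) : ℕ) ≤ n := by
      have := (σ.symm a).isLt; omega
    have h2 : ((σ.symm c : Fin (n+1)) : ℕ) ≤ n := by
      have := (σ.symm c).isLt; omega
    have h3 : (σ.symm a : ℕ) ≠ (σ.symm c : ℕ) := fun h => hpac (Fin.ext h)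
    omega
  set p1 : Fin (n+1) := ⟨(p:ℕ)+1, by omega⟩ with hp1def
  have hs1b : σ p1 ≠ b := by
    intro h
    have : p1 = p := by
      apply σ.injective
      rw [h, Equiv.apply_symm_apply]
    have := congrArg Fin.val this
    simp [hp1def] at this
  set opp : Fin (n+1) → Prop := if σ p1 < b then (fun v => b < v) else (fun v => v < b)
    with hoppdef
  set F : Finset (Fin (n+1)) :=
    Finset.univ.filter (fun r => (p:ℕ) < (r:ℕ) ∧ opp (σ r)) with hFdef
  have hFne : F.Nonempty := by
    by_cases hcase : σ p1 < b
    · exact ⟨σ.symm c, by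
        simp only [hFdef, Finset.mem_filter, Finset.mem_univ, true_and]
        refine ⟨hpc, ?_⟩
        simp only [hoppdef, if_pos hcase]
        rw [Equiv.apply_symm_apply]
        exact hbc⟩
    · exact ⟨σ.symm a, by
        simp only [hFdef, Finset.mem_filter, Finset.mem_univ, true_and]
        refine ⟨hpa, ?_⟩
        simp only [hoppdef, if_neg hcase]
        rw [Equiv.apply_symm_apply]
        exact hab⟩
  set r0 : Fin (n+1) := F.min' hFne with hr0def
  have hr0mem : (p:ℕ) < (r0:ℕ) ∧ opp (σ r0) :=
    (Finset.mem_filter.mp (F.min'_mem hFne)).2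
  have hsame : ∀ r : Fin (n+1), (p:ℕ) < (r:ℕ) → (r:ℕ) < (r0:ℕ) → ¬ opp (σ r) := by
    intro r h1 h2 hopp
    have : r ∈ F := Finset.mem_filter.mpr ⟨Finset.mem_univ _, h1, hopp⟩
    have := F.min'_le r this
    rw [← hr0def] at this
    omega
  have hr0p2 : (p:ℕ) + 2 ≤ (r0:ℕ) := by
    rcases Nat.lt_or_ge ((r0:ℕ)) ((p:ℕ)+2) with h | h
    · exfalso
      have hval : r0 = p1 := Fin.ext (by show (r0:ℕ) = (p:ℕ)+1; omega)
      have := hr0mem.2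
      rw [hval] at this
      by_cases hcase : σ p1 < b
      · rw [hoppdef] at this; simp only [if_pos hcase] at this
        exact absurd (hcase.trans this) (lt_irrefl _)
      · rw [hoppdef] at this; simp only [if_neg hcase] at this
        exact hcase this
    · exact h
  have hr0n : (r0:ℕ) ≤ n := by have := r0.isLt; omega
  set q : Fin (n+1) := ⟨(r0:ℕ) - 1, by omega⟩ with hqdef
  have hqval : (q:ℕ) = (r0:ℕ) - 1 := rfl
  have hpq : (p:ℕ) < (q:ℕ) := by omega
  have hqn : (q:ℕ) + 1 ≤ n := by omega
  set σ' : Equiv.Perm (Fin (n+1)) := (cyc p q).trans σ with hσ'def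
  have happ : ∀ i : Fin (n+1), σ' i = σ (cyc p q i) := fun i => rfl
  have hsymm : ∀ v, σ'.symm v = (cyc p q).symm (σ.symm v) := fun v => rfl
  have hcast : ∀ i : ℕ, i ≤ n → (((i : ℕ) : Fin (n+1)) : ℕ) = i :=
    fun i h => Fin.val_cast_of_lt (by omega)
  have hPos : ∀ v, (σ'.symm v : ℕ) =
      if (σ.symm v:ℕ) < (p:ℕ) ∨ (q:ℕ) < (σ.symm v:ℕ) then (σ.symm v:ℕ)
      else if (σ.symm v:ℕ) = (p:ℕ) then (q:ℕ) else (σ.symm v:ℕ) - 1 := by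
    intro v; rw [hsymm v, cyc_symm_val]
  have hcases : ∀ u, ((σ'.symm u:ℕ) = (σ.symm u:ℕ) ∧ ((σ.symm u:ℕ) < (p:ℕ) ∨ (q:ℕ) < (σ.symm u:ℕ)))
      ∨ ((σ.symm u:ℕ) = (p:ℕ) ∧ (σ'.symm u:ℕ) = (q:ℕ))
      ∨ ((p:ℕ) < (σ.symm u:ℕ) ∧ (σ.symm u:ℕ) ≤ (q:ℕ) ∧ (σ'.symm u:ℕ) = (σ.symm u:ℕ) - 1) := by
    intro u
    rw [hPos u]
    split_ifs with h1 h2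
    · exact Or.inl ⟨rfl, h1⟩
    · exact Or.inr (Or.inl ⟨h2, rfl⟩)
    · exact Or.inr (Or.inr ⟨by omega, by omega, rfl⟩)
  have hneqp : ∀ u, u ≠ b → (σ.symm u : ℕ) ≠ (p:ℕ) := by
    intro u hub h
    exact hub (σ.symm.injective (Fin.ext (h.trans (rfl : (p:ℕ) = (p:ℕ)))))
  have hσ'0 : σ' 0 = t := by
    rw [happ, show cyc p q 0 = 0 from Fin.ext (by
      rw [cyc_val]; simp only [Fin.val_zero]; exact if_pos (Or.inl (by omega))), hσ0]
  -- the node b sits at position p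
  have hσp : σ p = b := Equiv.apply_symm_apply σ b
  -- cost comparison
  have hcost : pathTourCost n x w f σ' ≤ pathTourCost n x w f σ := by
    rw [pathTourCost_eq_costN, pathTourCost_eq_costN]
    apply costN_le hw hf hf0 _ _ (p:ℕ) (q:ℕ) hp1 hpq hqn
    · intro i hi
      show σ' _ = σ _
      rw [happ]
      congr 1
      apply Fin.ext
      rw [cyc_val, hcast i (by omega), if_pos (Or.inl hi)]
    · intro i hpi hiq
      show σ' _ = σ _
      rw [happ]
      congr 1
      apply Fin.ext
      have h1 : ¬(i < (p:ℕ) ∨ (q:ℕ) < i) := by omega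
      have h2 : ¬(i = (q:ℕ)) := by omega
      rw [cyc_val, hcast i (by omega), if_neg h1, if_neg h2, hcast (i+1) (by omega)]
    · show σ' _ = σ _
      rw [happ]
      congr 1
      apply Fin.ext
      have h1 : ¬((q:ℕ) < (p:ℕ) ∨ (q:ℕ) < (q:ℕ)) := by omega
      rw [cyc_val, Fin.cast_val_eq_self q, Fin.cast_val_eq_self p, if_neg h1, if_pos rfl]
    · intro i hqi hin
      show σ' _ = σ _
      rw [happ]
      congr 1
      apply Fin.ext
      rw [cyc_val, hcast i (by omega), if_pos (Or.inr hqi)]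
    · -- betweenness
      have e1 : (((q:ℕ) : ℕ) : Fin (n+1)) = q := Fin.cast_val_eq_self q
      have e2 : (((p:ℕ) : ℕ) : Fin (n+1)) = p := Fin.cast_val_eq_self p
      have e3 : (((q:ℕ) + 1 : ℕ) : Fin (n+1)) = r0 := Fin.ext (by
        rw [hcast ((q:ℕ)+1) (by omega)]; omega)
      simp only [e1, e2, e3, hσp]
      have hqneb : σ q ≠ b := by
        intro h
        have : q = p := σ.injective (h.trans hσp.symm)
        have := congrArg Fin.val this
        omega
      have hqside := hsame q (by omega) (by omega)
      by_cases hcase : σ p1 < b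
      · rw [hoppdef] at hqside hr0mem
        simp only [if_pos hcase] at hqside hr0mem
        have h1 : σ q < b := by
          rcases lt_trichotomy (σ q) b with h|h|h
          · exact h
          · exact absurd h hqneb
          · exact absurd h hqside
        exact abs_between (hx h1.le) (hx hr0mem.2.le)
      · rw [hoppdef] at hqside hr0mem
        simp only [if_neg hcase] at hqside hr0mem
        have h1 : b < σ q := by
          rcases lt_trichotomy (σ q) b with h|h|h
          · exact absurd h hqside
          · exact absurd h hqneb
          · exact h
        exact abs_between' (hx hr0mem.2.le) (hx h1.le)
  -- premature bookkeeping
  have hpremb : premP t σ b := ⟨hbt, a, c, hab, hbc, hpa, hpc⟩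
  have hposr0 : (σ.symm (σ r0) : ℕ) = (r0 : ℕ) := by rw [Equiv.symm_apply_apply]
  have key : ∀ v, v ≠ b → premP t σ' v →
      premP t σ v ∧ (σ'.symm v : ℕ) = (σ.symm v : ℕ) := by
    intro v hvb hpv
    obtain ⟨hvt, a', c', ha'v, hvc', h1, h2⟩ := hpv
    have hvp := hneqp v hvb
    rcases hcases v with ⟨e1, e2⟩ | ⟨e1, e2⟩ | ⟨e1, e2, e3⟩
    · rcases e2 with e2 | e2
      · -- pv < p : transfer
        refine ⟨⟨hvt, a', c', ha'v, hvc', ?_, ?_⟩, e1⟩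
        · rcases hcases a' with ⟨f1, f2⟩ | ⟨f1, f2⟩ | ⟨f1, f2, f3⟩ <;> omega
        · rcases hcases c' with ⟨f1, f2⟩ | ⟨f1, f2⟩ | ⟨f1, f2, f3⟩ <;> omega
      · -- pv > q : v would be premature in σ beyond p, contradiction
        exfalso
        have hprem : premP t σ v := by
          refine ⟨hvt, a', c', ha'v, hvc', ?_, ?_⟩
          · rcases hcases a' with ⟨f1, f2⟩ | ⟨f1, f2⟩ | ⟨f1, f2, f3⟩ <;> omega
          · rcases hcases c' with ⟨f1, f2⟩ | ⟨f1, f2⟩ | ⟨f1, f2, f3⟩ <;> omega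
        have := hmax v hprem
        omega
    · exact absurd e1 hvp
    · -- p < pv ≤ q : shifted node, contradiction
      exfalso
      have hvr0 : (σ.symm v : ℕ) < (r0:ℕ) := by omega
      have hnopp : ¬ opp (σ (σ.symm v)) := hsame (σ.symm v) (by omega) (by omega)
      rw [Equiv.apply_symm_apply] at hnopp
      by_cases hcase : σ p1 < b
      · rw [hoppdef] at hnopp hr0mem
        simp only [if_pos hcase] at hnopp hr0mem
        have hvltb : v < b := by
          rcases lt_trichotomy v b with h|h|h
          · exact h
          · exact absurd h hvb
          · exact absurd h hnopp
        have ha'b : a' ≠ b := by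
          intro h
          rw [h] at ha'v
          exact absurd (ha'v.trans hvltb) (lt_irrefl b)
        have hpa' : (σ.symm v : ℕ) < (σ.symm a' : ℕ) := by
          have := hneqp a' ha'b
          rcases hcases a' with ⟨f1, f2⟩ | ⟨f1, f2⟩ | ⟨f1, f2, f3⟩ <;> omega
        have hprem : premP t σ v :=
          ⟨hvt, a', σ r0, ha'v, hvltb.trans hr0mem.2, hpa', by rw [hposr0]; omega⟩
        have := hmax v hprem
        omega
      · rw [hoppdef] at hnopp hr0mem
        simp only [if_neg hcase] at hnopp hr0mem
        have hbltv : b < v := by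
          rcases lt_trichotomy v b with h|h|h
          · exact absurd h hnopp
          · exact absurd h hvb
          · exact h
        have hc'b : c' ≠ b := by
          intro h
          rw [h] at hvc'
          exact absurd (hbltv.trans hvc') (lt_irrefl b)
        have hpc' : (σ.symm v : ℕ) < (σ.symm c' : ℕ) := by
          have := hneqp c' hc'b
          rcases hcases c' with ⟨f1, f2⟩ | ⟨f1, f2⟩ | ⟨f1, f2, f3⟩ <;> omega
        have hprem : premP t σ v :=
          ⟨hvt, σ r0, c', hr0mem.2.trans hbltv, hvc', by rw [hposr0]; omega, hpc'⟩
        have := hmax v hprem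
        omega
  have hposb' : (σ'.symm b : ℕ) = (q:ℕ) := by
    have h := hPos b
    rw [← hpdef] at h
    rw [h, if_neg (show ¬((p:ℕ) < (p:ℕ) ∨ (q:ℕ) < (p:ℕ)) by omega), if_pos rfl]
  -- Om decreases
  have hOm : Om t σ' < Om t σ := by
    unfold Om
    set A' := Finset.univ.filter (fun v => premP t σ' v) with hA'def
    set A := Finset.univ.filter (fun v => premP t σ v) with hAdef
    have hbA : b ∈ A := by
      rw [hAdef, Finset.mem_filter]
      exact ⟨Finset.mem_univ _, hpremb⟩
    have hsub : A' ⊆ A := by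
      intro v hv
      rw [hA'def, Finset.mem_filter] at hv
      by_cases hvb : v = b
      · rw [hvb]; exact hbA
      · rw [hAdef, Finset.mem_filter]
        exact ⟨Finset.mem_univ _, (key v hvb hv.2).1⟩
    have hstep1 : ∀ v ∈ A', (n - (σ'.symm v : ℕ)) ≤ (n - (σ.symm v : ℕ)) := by
      intro v hv
      by_cases hvb : v = b
      · have := hposb'
        rw [hvb]
        rw [this, ← hpdef]
        omega
      · rw [hA'def, Finset.mem_filter] at hv
        rw [(key v hvb hv.2).2]
    have hstep2 : ∑ v ∈ A, (n - (σ.symm v : ℕ)) = Om t σ := by rw [Om, hAdef]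
    by_cases hbA' : b ∈ A'
    · have hlt : ∑ v ∈ A', (n - (σ'.symm v : ℕ)) < ∑ v ∈ A', (n - (σ.symm v : ℕ)) := by
        apply Finset.sum_lt_sum hstep1
        exact ⟨b, hbA', by rw [hposb', ← hpdef]; omega⟩
      have hle : ∑ v ∈ A', (n - (σ.symm v : ℕ)) ≤ ∑ v ∈ A, (n - (σ.symm v : ℕ)) :=
        Finset.sum_le_sum_of_subset hsub
      omega
    · have hle : ∑ v ∈ A', (n - (σ'.symm v : ℕ)) ≤ ∑ v ∈ A', (n - (σ.symm v : ℕ)) :=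
        Finset.sum_le_sum hstep1
      have hlt : ∑ v ∈ A', (n - (σ.symm v : ℕ)) < ∑ v ∈ A, (n - (σ.symm v : ℕ)) := by
        apply Finset.sum_lt_sum_of_subset hsub hbA hbA'
        · rw [← hpdef]; omega
        · intro j _ _; omega
      omega
  exact ⟨σ', hσ'0, hcost, hOm⟩

lemma exists_noPrem (hx : Monotone x) (hw : ∀ v, 0 ≤ w v) (hf : Monotone f)
    (hf0 : ∀ y, 0 ≤ f y) :
    ∀ (k : ℕ) (σ : Equiv.Perm (Fin (n+1))), σ 0 = t → Om t σ ≤ k →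
      ∃ τ : Equiv.Perm (Fin (n+1)), τ 0 = t ∧ (∀ v, ¬ premP t τ v) ∧
        pathTourCost n x w f τ ≤ pathTourCost n x w f σ := by
  intro k
  induction k with
  | zero =>
    intro σ hσ0 hOm
    by_cases hA : ∃ v, premP t σ v
    · exfalso
      obtain ⟨v, hv⟩ := hA
      have hne : (Finset.univ.filter (fun v => premP t σ v)).Nonempty :=
        ⟨v, Finset.mem_filter.mpr ⟨Finset.mem_univ _, hv⟩⟩
      obtain ⟨b, hbmem, hbmax⟩ := Finset.exists_max_image _ (fun v => (σ.symm v : ℕ)) hne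
      rw [Finset.mem_filter] at hbmem
      obtain ⟨σ', _, _, hOm'⟩ := repair hx hw hf hf0 hσ0 b hbmem.2
        (fun u hu => hbmax u (Finset.mem_filter.mpr ⟨Finset.mem_univ _, hu⟩))
      omega
    · push_neg at hA
      exact ⟨σ, hσ0, hA, le_refl _⟩
  | succ k ih =>
    intro σ hσ0 hOm
    by_cases hA : ∃ v, premP t σ v
    · obtain ⟨v, hv⟩ := hA
      have hne : (Finset.univ.filter (fun v => premP t σ v)).Nonempty :=
        ⟨v, Finset.mem_filter.mpr ⟨Finset.mem_univ _, hv⟩⟩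
      obtain ⟨b, hbmem, hbmax⟩ := Finset.exists_max_image _ (fun v => (σ.symm v : ℕ)) hne
      rw [Finset.mem_filter] at hbmem
      obtain ⟨σ', hσ'0, hcost, hOm'⟩ := repair hx hw hf hf0 hσ0 b hbmem.2
        (fun u hu => hbmax u (Finset.mem_filter.mpr ⟨Finset.mem_univ _, hu⟩))
      obtain ⟨τ, hτ0, hτnp, hτc⟩ := ih σ' hσ'0 (by omega)
      exact ⟨τ, hτ0, hτnp, hτc.trans hcost⟩
    · push_neg at hA
      exact ⟨σ, hσ0, hA, le_refl _⟩

end Repair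

/-- the tour t, 0, 1, …, t-1, t+1, …, n -/
lemma exists_noPrem_start (t : Fin (n+1)) :
    ∃ π : Equiv.Perm (Fin (n+1)), π 0 = t ∧ ∀ v, ¬ premP t π v := by
  refine ⟨(cyc 0 t).symm, ?_, ?_⟩
  · apply Fin.ext
    rw [show ((cyc 0 t).symm 0 : ℕ) = _ from cyc_symm_val 0 t 0]
    simp
  · rintro v ⟨hvt, a, c, hav, hvc, h1, h2⟩
    rw [show ((cyc 0 t).symm.symm) = cyc 0 t from Equiv.symm_symm _] at h1 h2
    have hv := cyc_val 0 t v
    have ha := cyc_val 0 t a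
    have hvt' : (v:ℕ) ≠ (t:ℕ) := fun h => hvt (Fin.ext h)
    have hav' : (a:ℕ) < (v:ℕ) := hav
    simp only [Fin.val_zero, Nat.not_lt_zero, false_or] at hv ha
    -- positions: a gets position < position of v
    split_ifs at hv <;> split_ifs at ha <;> omega

theorem main (n : ℕ) (x w : Fin (n + 1) → ℝ) (hx : Monotone x) (hw : ∀ v, 0 ≤ w v)
    (f : ℝ → ℝ) (hf : Monotone f) (hf0 : ∀ y, 0 ≤ f y) (t : Fin (n + 1)) :
    ∃ π : Equiv.Perm (Fin (n + 1)), π 0 = t ∧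
      (∀ σ : Equiv.Perm (Fin (n + 1)), σ 0 = t →
        pathTourCost n x w f π ≤ pathTourCost n x w f σ) ∧
      ∀ a b c : Fin (n + 1), a < b → b < c → b ≠ t →
        (π.symm a < π.symm b ∨ π.symm c < π.symm b) := by
  classical
  set S : Finset (Equiv.Perm (Fin (n+1))) :=
    Finset.univ.filter (fun π => π 0 = t ∧ ∀ v, ¬ premP t π v) with hSdef
  have hSne : S.Nonempty := by
    obtain ⟨π, h1, h2⟩ := exists_noPrem_start t
    exact ⟨π, Finset.mem_filter.mpr ⟨Finset.mem_univ _, h1, h2⟩⟩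
  obtain ⟨π, hπS, hπmin⟩ := Finset.exists_min_image S (pathTourCost n x w f) hSne
  rw [hSdef, Finset.mem_filter] at hπS
  obtain ⟨-, hπ0, hπnp⟩ := hπS
  refine ⟨π, hπ0, ?_, ?_⟩
  · intro σ hσ0
    obtain ⟨τ, hτ0, hτnp, hτc⟩ := exists_noPrem hx hw hf hf0 (Om t σ) σ hσ0 (le_refl _)
    have hτS : τ ∈ S := Finset.mem_filter.mpr ⟨Finset.mem_univ _, hτ0, hτnp⟩
    exact (hπmin τ hτS).trans hτc
  · intro a b c hab hbc hbt
    have hnp := hπnp b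
    have hkey : ¬ ((π.symm b : ℕ) < (π.symm a : ℕ) ∧ (π.symm b : ℕ) < (π.symm c : ℕ)) := by
      rintro ⟨h1, h2⟩
      exact hnp ⟨hbt, a, c, hab, hbc, h1, h2⟩
    have hnea : (π.symm a : ℕ) ≠ (π.symm b : ℕ) := fun h => by
      have : a = b := π.symm.injective (Fin.ext h)
      exact absurd this (ne_of_lt hab)
    have hnec : (π.symm c : ℕ) ≠ (π.symm b : ℕ) := fun h => by
      have : c = b := π.symm.injective (Fin.ext h)
      exact absurd this (ne_of_gt hbc)
    simp only [Fin.lt_def]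
    omega

end Stmt6


/-- No-premature-visit lemma: on a path metric with fixed start `t`, there is an optimal
tour such that for every `a < b < c` (left-to-right order of nodes), `v_a` or `v_c` is
visited before `v_b` (for `b` other than the start node). -/
theorem stmt_6 (n : ℕ) (x w : Fin (n + 1) → ℝ) (hx : Monotone x) (hw : ∀ v, 0 ≤ w v)
    (f : ℝ → ℝ) (hf : Monotone f) (hf0 : ∀ y, 0 ≤ f y) (t : Fin (n + 1)) :
    ∃ π : Equiv.Perm (Fin (n + 1)), π 0 = t ∧
      (∀ σ : Equiv.Perm (Fin (n + 1)), σ 0 = t →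
        pathTourCost n x w f π ≤ pathTourCost n x w f σ) ∧
      ∀ a b c : Fin (n + 1), a < b → b < c → b ≠ t →
        (π.symm a < π.symm b ∨ π.symm c < π.symm b) :=
  Stmt6.main n x w hx hw f hf hf0 t
end

section
/- On a path metric, there exists an optimal W-TSP tour such that at every step, the next node visited among the remaining unvisited nodes is either the leftmost or the rightmost of the remaining unvisited nodes. -/
open Finset

namespace Stmt7Aux

def nv (n i : ℕ) : Fin (n + 1) := ⟨i % (n + 1), Nat.mod_lt _ (Nat.succ_pos n)⟩

lemma nv_val {n i : ℕ} (h : i ≤ n) : (nv n i).val = i := Nat.mod_eq_of_lt (by omega)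

lemma nv_fin {n : ℕ} (j : Fin (n + 1)) : nv n j.val = j :=
  Fin.ext (nv_val (by omega))

/-- The shift map on indices: identity below `t` and above `p`, cycles `[t,p]`. -/
def gmap (t p j : ℕ) : ℕ :=
  if j < t then j else if j < p then j + 1 else if j = p then t else j

def gmapInv (t p j : ℕ) : ℕ :=
  if j < t then j else if j = t then p else if j ≤ p then j - 1 else j

lemma gmap_le {t p j n : ℕ} (ht : t ≤ p) (hp : p ≤ n) (hj : j ≤ n) : gmap t p j ≤ n := by
  unfold gmap; split_ifs <;> omega

lemma gmapInv_le {t p j n : ℕ} (ht : t ≤ p) (hp : p ≤ n) (hj : j ≤ n) : gmapInv t p j ≤ n := by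
  unfold gmapInv; split_ifs <;> omega

lemma gmapInv_gmap {t p j : ℕ} (h : t < p) : gmapInv t p (gmap t p j) = j := by
  unfold gmap gmapInv; split_ifs <;> omega

lemma gmap_gmapInv {t p j : ℕ} (h : t < p) : gmap t p (gmapInv t p j) = j := by
  unfold gmap gmapInv; split_ifs <;> omega

lemma gmap_of_lt {t p j : ℕ} (h : j < t) : gmap t p j = j := by unfold gmap; split_ifs <;> omega

lemma gmap_of_mid {t p j : ℕ} (h1 : t ≤ j) (h2 : j < p) : gmap t p j = j + 1 := by
  unfold gmap; split_ifs <;> omega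

lemma gmap_of_p {t p : ℕ} (h : t < p) : gmap t p p = t := by unfold gmap; split_ifs <;> omega

lemma gmap_of_gt {t p j : ℕ} (h : p < j) : gmap t p j = j := by unfold gmap; split_ifs <;> omega

lemma gmap_ge_min {t p j : ℕ} : min j t ≤ gmap t p j := by unfold gmap; split_ifs <;> omega

/-- The cyclic permutation `(p ↦ t ↦ t+1 ↦ ⋯ ↦ p)` of `Fin (n+1)`. -/
def cyc (n t p : ℕ) (htp : t < p) (hpn : p ≤ n) : Equiv.Perm (Fin (n + 1)) where
  toFun j := ⟨gmap t p j.val, by have := gmap_le (n := n) htp.le hpn (by omega : j.val ≤ n); omega⟩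
  invFun j := ⟨gmapInv t p j.val, by have := gmapInv_le (n := n) htp.le hpn (by omega : j.val ≤ n); omega⟩
  left_inv j := Fin.ext (by simpa using gmapInv_gmap (j := j.val) htp)
  right_inv j := Fin.ext (by simpa using gmap_gmapInv (j := j.val) htp)

lemma cyc_val {n t p : ℕ} (htp : t < p) (hpn : p ≤ n) (j : Fin (n + 1)) :
    ((cyc n t p htp hpn) j).val = gmap t p j.val := rfl

lemma cyc_nv {n t p i : ℕ} (htp : t < p) (hpn : p ≤ n) (hi : i ≤ n) :
    (cyc n t p htp hpn) (nv n i) = nv n (gmap t p i) := by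
  apply Fin.ext
  rw [cyc_val, nv_val hi, nv_val (gmap_le htp.le hpn hi)]

lemma cyc_of_lt {n t p : ℕ} (htp : t < p) (hpn : p ≤ n) (j : Fin (n + 1)) (h : j.val < t) :
    (cyc n t p htp hpn) j = j := Fin.ext (by rw [cyc_val]; exact gmap_of_lt h)

/-- `ncost`: the tour cost written with natural-number indices. -/
noncomputable def ncost (n : ℕ) (x w : Fin (n + 1) → ℝ) (f : ℝ → ℝ)
    (σ : Equiv.Perm (Fin (n + 1))) : ℝ :=
  (∑ i ∈ Finset.range n, f (∑ j ∈ Finset.Ioc 0 i, w (σ (nv n j))) *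
      |x (σ (nv n i)) - x (σ (nv n (i + 1)))|) +
    f (∑ j ∈ Finset.Ioc 0 n, w (σ (nv n j))) * |x (σ (nv n n)) - x (σ (nv n 0))|

lemma sum_Ioc_fin {n : ℕ} (w : Fin (n+1) → ℝ) (c : Fin (n + 1)) :
    ∑ j ∈ Finset.Ioc (0 : Fin (n + 1)) c, w j = ∑ j ∈ Finset.Ioc 0 (c : ℕ), w (nv n j) := by
  have h : (Finset.Ioc (0:ℕ) (c:ℕ)) = (Finset.Ioc (0 : Fin (n + 1)) c).map Fin.valEmbedding := by
    rw [Fin.map_valEmbedding_Ioc]; simp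
  rw [h, Finset.sum_map]
  exact Finset.sum_congr rfl fun j _ => by simp [Fin.valEmbedding, nv_fin]

lemma pathTourCost_eq_ncost (n : ℕ) (x w : Fin (n+1) → ℝ) (f : ℝ → ℝ)
    (σ : Equiv.Perm (Fin (n + 1))) : pathTourCost n x w f σ = ncost n x w f σ := by
  unfold pathTourCost ncost
  congr 1
  · rw [← Fin.sum_univ_eq_sum_range (fun i =>
      f (∑ j ∈ Finset.Ioc 0 i, w (σ (nv n j))) * |x (σ (nv n i)) - x (σ (nv n (i + 1)))|) n]
    refine Finset.sum_congr rfl (fun i _ => ?_)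
    have h1 : i.castSucc = nv n (i : ℕ) := by
      apply Fin.ext; rw [nv_val (by omega)]; simp
    have h2 : i.succ = nv n ((i : ℕ) + 1) := by
      apply Fin.ext; rw [nv_val (by omega)]; simp
    rw [h1, h2, sum_Ioc_fin (fun j => w (σ j)), nv_val (by omega)]
  · have h3 : Fin.last n = nv n n := by apply Fin.ext; rw [nv_val le_rfl]; simp
    have h0 : (0 : Fin (n+1)) = nv n 0 := by apply Fin.ext; rw [nv_val (by omega)]; simp
    rw [h3, sum_Ioc_fin (fun j => w (σ j)), nv_val le_rfl, ← h3]
    rw [h3, h0]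

lemma split_new (n t0 s : ℕ) (hn : t0 + 2 + s < n) (T : ℕ → ℝ) :
    ∑ i ∈ range n, T i =
      (∑ i ∈ Ico 0 t0, T i) + T t0 + (∑ i ∈ Ico (t0+1) (t0+1+s), T i) + T (t0+1+s)
        + T (t0+2+s) + ∑ i ∈ Ico (t0+3+s) n, T i := by
  rw [range_eq_Ico,
    ← Finset.sum_Ico_consecutive T (show (0:ℕ) ≤ t0+3+s by omega) (show t0+3+s ≤ n by omega),
    ← Finset.sum_Ico_consecutive T (show (0:ℕ) ≤ t0+2+s by omega) (show t0+2+s ≤ t0+3+s by omega),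
    ← Finset.sum_Ico_consecutive T (show (0:ℕ) ≤ t0+1+s by omega) (show t0+1+s ≤ t0+2+s by omega),
    ← Finset.sum_Ico_consecutive T (show (0:ℕ) ≤ t0+1 by omega) (show t0+1 ≤ t0+1+s by omega),
    ← Finset.sum_Ico_consecutive T (show (0:ℕ) ≤ t0 by omega) (show t0 ≤ t0+1 by omega)]
  have s1 : Finset.Ico t0 (t0+1) = {t0} := by simp [Finset.Ico_add_one_right_eq_Icc]
  have s2 : Finset.Ico (t0+1+s) (t0+2+s) = {t0+1+s} := by
    rw [show t0+2+s = (t0+1+s)+1 by omega]; simp [Finset.Ico_add_one_right_eq_Icc]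
  have s3 : Finset.Ico (t0+2+s) (t0+3+s) = {t0+2+s} := by
    rw [show t0+3+s = (t0+2+s)+1 by omega]; simp [Finset.Ico_add_one_right_eq_Icc]
  rw [s1, s2, s3]
  simp only [Finset.sum_singleton]

lemma split_old (n t0 s : ℕ) (hn : t0 + 2 + s < n) (T : ℕ → ℝ) :
    ∑ i ∈ range n, T i =
      (∑ i ∈ Ico 0 t0, T i) + T t0 + T (t0+1) + (∑ i ∈ Ico (t0+2) (t0+2+s), T i)
        + T (t0+2+s) + ∑ i ∈ Ico (t0+3+s) n, T i := by
  rw [range_eq_Ico,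
    ← Finset.sum_Ico_consecutive T (show (0:ℕ) ≤ t0+3+s by omega) (show t0+3+s ≤ n by omega),
    ← Finset.sum_Ico_consecutive T (show (0:ℕ) ≤ t0+2+s by omega) (show t0+2+s ≤ t0+3+s by omega),
    ← Finset.sum_Ico_consecutive T (show (0:ℕ) ≤ t0+2 by omega) (show t0+2 ≤ t0+2+s by omega),
    ← Finset.sum_Ico_consecutive T (show (0:ℕ) ≤ t0+1 by omega) (show t0+1 ≤ t0+2 by omega),
    ← Finset.sum_Ico_consecutive T (show (0:ℕ) ≤ t0 by omega) (show t0 ≤ t0+1 by omega)]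
  have s1 : Finset.Ico t0 (t0+1) = {t0} := by simp [Finset.Ico_add_one_right_eq_Icc]
  have s2 : Finset.Ico (t0+1) (t0+2) = {t0+1} := by
    rw [show t0+2 = (t0+1)+1 by omega]; simp [Finset.Ico_add_one_right_eq_Icc]
  have s3 : Finset.Ico (t0+2+s) (t0+3+s) = {t0+2+s} := by
    rw [show t0+3+s = (t0+2+s)+1 by omega]; simp [Finset.Ico_add_one_right_eq_Icc]
  rw [s1, s2, s3]
  simp only [Finset.sum_singleton]

lemma exchange_sum (f : ℝ → ℝ) (hf : Monotone f) (hf0 : ∀ y, 0 ≤ f y)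
    (a u : ℕ → ℝ) (hu : ∀ i, 0 ≤ u i) (n t0 s : ℕ) (hpn : t0 + 2 + s < n)
    (hbet : |a (t0+2+s) - a (t0+3+s)| = |a (t0+2+s) - a (t0+1)| + |a (t0+1) - a (t0+3+s)|) :
    (∑ i ∈ range n, f (∑ j ∈ Ioc 0 i, u (gmap (t0+1) (t0+2+s) j)) *
        |a (gmap (t0+1) (t0+2+s) i) - a (gmap (t0+1) (t0+2+s) (i+1))|)
      + f (∑ j ∈ Ioc 0 n, u (gmap (t0+1) (t0+2+s) j)) *
          |a (gmap (t0+1) (t0+2+s) n) - a (gmap (t0+1) (t0+2+s) 0)|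
    ≤ (∑ i ∈ range n, f (∑ j ∈ Ioc 0 i, u j) * |a i - a (i+1)|)
        + f (∑ j ∈ Ioc 0 n, u j) * |a n - a 0| := by
  rw [split_new n t0 s hpn (fun i => f (∑ j ∈ Ioc 0 i, u (gmap (t0+1) (t0+2+s) j)) *
        |a (gmap (t0+1) (t0+2+s) i) - a (gmap (t0+1) (t0+2+s) (i+1))|),
     split_old n t0 s hpn (fun i => f (∑ j ∈ Ioc 0 i, u j) * |a i - a (i+1)|)]
  have hWW : ∀ i j : ℕ, i ≤ j → (∑ k ∈ Ioc 0 i, u k) ≤ ∑ k ∈ Ioc 0 j, u k := fun i j h =>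
    Finset.sum_le_sum_of_subset_of_nonneg (Finset.Ioc_subset_Ioc le_rfl h) (fun k _ _ => hu k)
  have hW1 : ∀ i : ℕ, i ≤ t0 → (∑ j ∈ Ioc 0 i, u (gmap (t0+1) (t0+2+s) j)) = ∑ j ∈ Ioc 0 i, u j := by
    intro i hi
    refine Finset.sum_congr rfl fun j hj => ?_
    rw [Finset.mem_Ioc] at hj
    rw [gmap_of_lt (by omega)]
  have hW2 : ∀ i : ℕ, t0+1 ≤ i → i < t0+2+s →
      (∑ j ∈ Ioc 0 i, u (gmap (t0+1) (t0+2+s) j)) = (∑ j ∈ Ioc 0 (i+1), u j) - u (t0+1) := by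
    intro i h1 h2
    have split1 : (∑ j ∈ Ioc 0 t0, u (gmap (t0+1) (t0+2+s) j))
        + (∑ j ∈ Ioc t0 i, u (gmap (t0+1) (t0+2+s) j))
        = ∑ j ∈ Ioc 0 i, u (gmap (t0+1) (t0+2+s) j) :=
      Finset.sum_Ioc_consecutive _ (by omega) (by omega)
    have e1 : (∑ j ∈ Ioc 0 t0, u (gmap (t0+1) (t0+2+s) j)) = ∑ j ∈ Ioc 0 t0, u j := hW1 t0 le_rfl
    have e2 : (∑ j ∈ Ioc t0 i, u (gmap (t0+1) (t0+2+s) j)) = ∑ j ∈ Ioc t0 i, u (j+1) := by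
      refine Finset.sum_congr rfl fun j hj => ?_
      rw [Finset.mem_Ioc] at hj
      rw [gmap_of_mid (by omega) (by omega)]
    have e3 : (∑ j ∈ Ioc t0 i, u (j+1)) = ∑ j ∈ Ioc (t0+1) (i+1), u j := by
      rw [← Finset.map_add_right_Ioc, Finset.sum_map]
      rfl
    have split2 : (∑ j ∈ Ioc 0 t0, u j) + (∑ j ∈ Ioc t0 (i+1), u j) = ∑ j ∈ Ioc 0 (i+1), u j :=
      Finset.sum_Ioc_consecutive _ (by omega) (by omega)
    have split3 : (∑ j ∈ Ioc t0 (t0+1), u j) + (∑ j ∈ Ioc (t0+1) (i+1), u j)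
        = ∑ j ∈ Ioc t0 (i+1), u j := Finset.sum_Ioc_consecutive _ (by omega) (by omega)
    have e4 : (∑ j ∈ Ioc t0 (t0+1), u j) = u (t0+1) := by
      rw [Nat.Ioc_succ_singleton, Finset.sum_singleton]
    linarith
  have hW3 : ∀ i : ℕ, t0+2+s ≤ i →
      (∑ j ∈ Ioc 0 i, u (gmap (t0+1) (t0+2+s) j)) = ∑ j ∈ Ioc 0 i, u j := by
    intro i hi
    refine Finset.sum_nbij' (gmap (t0+1) (t0+2+s)) (gmapInv (t0+1) (t0+2+s)) ?_ ?_ ?_ ?_ ?_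
    · intro j hj
      simp only [Finset.mem_Ioc] at *
      unfold gmap; split_ifs <;> omega
    · intro j hj
      simp only [Finset.mem_Ioc] at *
      unfold gmapInv; split_ifs <;> omega
    · exact fun j _ => gmapInv_gmap (by omega)
    · exact fun j _ => gmap_gmapInv (by omega)
    · exact fun j _ => rfl
  -- piece 1
  have h1 : (∑ i ∈ Ico 0 t0, f (∑ j ∈ Ioc 0 i, u (gmap (t0+1) (t0+2+s) j)) *
      |a (gmap (t0+1) (t0+2+s) i) - a (gmap (t0+1) (t0+2+s) (i+1))|)
      = ∑ i ∈ Ico 0 t0, f (∑ j ∈ Ioc 0 i, u j) * |a i - a (i+1)| := by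
    refine Finset.sum_congr rfl fun i hi => ?_
    rw [Finset.mem_Ico] at hi
    rw [hW1 i (by omega), gmap_of_lt (by omega), gmap_of_lt (by omega)]
  -- piece 2
  have h2 : f (∑ j ∈ Ioc 0 t0, u (gmap (t0+1) (t0+2+s) j)) *
      |a (gmap (t0+1) (t0+2+s) t0) - a (gmap (t0+1) (t0+2+s) (t0+1))|
      ≤ f (∑ j ∈ Ioc 0 t0, u j) * |a t0 - a (t0+1)|
        + f (∑ j ∈ Ioc 0 (t0+1), u j) * |a (t0+1) - a (t0+1+1)| := by
    rw [hW1 t0 le_rfl, gmap_of_lt (by omega), gmap_of_mid (by omega) (by omega)]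
    have step1 : f (∑ j ∈ Ioc 0 t0, u j) * |a t0 - a (t0+1+1)|
        ≤ f (∑ j ∈ Ioc 0 t0, u j) * (|a t0 - a (t0+1)| + |a (t0+1) - a (t0+1+1)|) :=
      mul_le_mul_of_nonneg_left (abs_sub_le _ _ _) (hf0 _)
    have step2 : f (∑ j ∈ Ioc 0 t0, u j) * |a (t0+1) - a (t0+1+1)|
        ≤ f (∑ j ∈ Ioc 0 (t0+1), u j) * |a (t0+1) - a (t0+1+1)| :=
      mul_le_mul_of_nonneg_right (hf (hWW t0 (t0+1) (by omega))) (abs_nonneg _)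
    nlinarith [abs_nonneg (a t0 - a (t0+1))]
  -- piece 3
  have h3 : (∑ i ∈ Ico (t0+1) (t0+1+s), f (∑ j ∈ Ioc 0 i, u (gmap (t0+1) (t0+2+s) j)) *
      |a (gmap (t0+1) (t0+2+s) i) - a (gmap (t0+1) (t0+2+s) (i+1))|)
      ≤ ∑ i ∈ Ico (t0+2) (t0+2+s), f (∑ j ∈ Ioc 0 i, u j) * |a i - a (i+1)| := by
    have hmap : (∑ i ∈ Ico (t0+2) (t0+2+s), f (∑ j ∈ Ioc 0 i, u j) * |a i - a (i+1)|)
        = ∑ i ∈ Ico (t0+1) (t0+1+s), f (∑ j ∈ Ioc 0 (i+1), u j) * |a (i+1) - a (i+1+1)| := by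
      rw [show t0+2 = (t0+1)+1 by omega, show t0+2+s = (t0+1+s)+1 by omega,
        ← Finset.map_add_right_Ico, Finset.sum_map]
      rfl
    rw [hmap]
    refine Finset.sum_le_sum fun i hi => ?_
    rw [Finset.mem_Ico] at hi
    rw [hW2 i (by omega) (by omega), gmap_of_mid (by omega) (by omega),
      gmap_of_mid (by omega) (by omega)]
    exact mul_le_mul_of_nonneg_right (hf (by linarith [hu (t0+1)])) (abs_nonneg _)
  -- piece 4
  have h4 : f (∑ j ∈ Ioc 0 (t0+1+s), u (gmap (t0+1) (t0+2+s) j)) *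
      |a (gmap (t0+1) (t0+2+s) (t0+1+s)) - a (gmap (t0+1) (t0+2+s) (t0+1+s+1))|
      + f (∑ j ∈ Ioc 0 (t0+2+s), u (gmap (t0+1) (t0+2+s) j)) *
        |a (gmap (t0+1) (t0+2+s) (t0+2+s)) - a (gmap (t0+1) (t0+2+s) (t0+2+s+1))|
      ≤ f (∑ j ∈ Ioc 0 (t0+2+s), u j) * |a (t0+2+s) - a (t0+2+s+1)| := by
    have g1 : gmap (t0+1) (t0+2+s) (t0+1+s) = t0+2+s := by
      rw [gmap_of_mid (by omega) (by omega)]; omega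
    have g2 : gmap (t0+1) (t0+2+s) (t0+1+s+1) = t0+1 := by
      rw [show t0+1+s+1 = t0+2+s by omega, gmap_of_p (by omega)]
    have g3 : gmap (t0+1) (t0+2+s) (t0+2+s) = t0+1 := gmap_of_p (by omega)
    have g4 : gmap (t0+1) (t0+2+s) (t0+2+s+1) = t0+2+s+1 := gmap_of_gt (by omega)
    have e5 : (∑ j ∈ Ioc 0 (t0+1+s), u (gmap (t0+1) (t0+2+s) j))
        = (∑ j ∈ Ioc 0 (t0+2+s), u j) - u (t0+1) := by
      rw [hW2 (t0+1+s) (by omega) (by omega), show t0+1+s+1 = t0+2+s by omega]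
    rw [g1, g2, g3, g4, e5, hW3 (t0+2+s) le_rfl,
      show t0+2+s+1 = t0+3+s by omega, hbet]
    have step1 : f ((∑ j ∈ Ioc 0 (t0+2+s), u j) - u (t0+1)) * |a (t0+2+s) - a (t0+1)|
        ≤ f (∑ j ∈ Ioc 0 (t0+2+s), u j) * |a (t0+2+s) - a (t0+1)| :=
      mul_le_mul_of_nonneg_right (hf (by linarith [hu (t0+1)])) (abs_nonneg _)
    nlinarith [abs_nonneg (a (t0+1) - a (t0+3+s))]
  -- piece 5
  have h5 : (∑ i ∈ Ico (t0+3+s) n, f (∑ j ∈ Ioc 0 i, u (gmap (t0+1) (t0+2+s) j)) *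
      |a (gmap (t0+1) (t0+2+s) i) - a (gmap (t0+1) (t0+2+s) (i+1))|)
      = ∑ i ∈ Ico (t0+3+s) n, f (∑ j ∈ Ioc 0 i, u j) * |a i - a (i+1)| := by
    refine Finset.sum_congr rfl fun i hi => ?_
    rw [Finset.mem_Ico] at hi
    rw [hW3 i (by omega), gmap_of_gt (by omega), gmap_of_gt (by omega)]
  -- return edge
  have h6 : f (∑ j ∈ Ioc 0 n, u (gmap (t0+1) (t0+2+s) j)) *
      |a (gmap (t0+1) (t0+2+s) n) - a (gmap (t0+1) (t0+2+s) 0)|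
      = f (∑ j ∈ Ioc 0 n, u j) * |a n - a 0| := by
    rw [hW3 n (by omega), gmap_of_gt (by omega), gmap_of_lt (by omega)]
  linarith


/-- The exchange move at the permutation level: delaying the node at position `t`
to the crossing between positions `p` and `p+1` does not increase the cost. -/
lemma exchange_cost (n : ℕ) (x w : Fin (n+1) → ℝ) (f : ℝ → ℝ)
    (hw : ∀ v, 0 ≤ w v) (hf : Monotone f) (hf0 : ∀ y, 0 ≤ f y)
    (σ : Equiv.Perm (Fin (n + 1))) (t p : ℕ) (h1t : 1 ≤ t) (htp : t < p) (hpn : p < n)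
    (hbet : |x (σ (nv n p)) - x (σ (nv n (p+1)))|
      = |x (σ (nv n p)) - x (σ (nv n t))| + |x (σ (nv n t)) - x (σ (nv n (p+1)))|) :
    ncost n x w f (σ * cyc n t p htp hpn.le) ≤ ncost n x w f σ := by
  obtain ⟨t0, rfl⟩ : ∃ t0, t = t0 + 1 := ⟨t - 1, by omega⟩
  obtain ⟨s, rfl⟩ : ∃ s, p = t0 + 2 + s := ⟨p - (t0 + 2), by omega⟩
  have hmul : ∀ i : ℕ, i ≤ n →
      (σ * cyc n (t0+1) (t0+2+s) htp hpn.le) (nv n i) = σ (nv n (gmap (t0+1) (t0+2+s) i)) := by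
    intro i hi
    rw [Equiv.Perm.mul_apply, cyc_nv htp hpn.le hi]
  have hL : ncost n x w f (σ * cyc n (t0+1) (t0+2+s) htp hpn.le)
      = (∑ i ∈ range n, f (∑ j ∈ Ioc 0 i, w (σ (nv n (gmap (t0+1) (t0+2+s) j)))) *
          |x (σ (nv n (gmap (t0+1) (t0+2+s) i))) - x (σ (nv n (gmap (t0+1) (t0+2+s) (i+1))))|)
        + f (∑ j ∈ Ioc 0 n, w (σ (nv n (gmap (t0+1) (t0+2+s) j)))) *
            |x (σ (nv n (gmap (t0+1) (t0+2+s) n))) - x (σ (nv n (gmap (t0+1) (t0+2+s) 0)))| := by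
    unfold ncost
    congr 1
    · refine Finset.sum_congr rfl fun i hi => ?_
      rw [Finset.mem_range] at hi
      have hsum : (∑ j ∈ Ioc 0 i, w ((σ * cyc n (t0+1) (t0+2+s) htp hpn.le) (nv n j)))
          = ∑ j ∈ Ioc 0 i, w (σ (nv n (gmap (t0+1) (t0+2+s) j))) := by
        refine Finset.sum_congr rfl fun j hj => ?_
        rw [Finset.mem_Ioc] at hj
        rw [hmul j (by omega)]
      rw [hsum, hmul i (by omega), hmul (i+1) (by omega)]
    · have hsum : (∑ j ∈ Ioc 0 n, w ((σ * cyc n (t0+1) (t0+2+s) htp hpn.le) (nv n j)))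
          = ∑ j ∈ Ioc 0 n, w (σ (nv n (gmap (t0+1) (t0+2+s) j))) := by
        refine Finset.sum_congr rfl fun j hj => ?_
        rw [Finset.mem_Ioc] at hj
        rw [hmul j (by omega)]
      rw [hsum, hmul n le_rfl, hmul 0 (by omega)]
  rw [hL]
  have hbet' : |x (σ (nv n (t0+2+s))) - x (σ (nv n (t0+3+s)))|
      = |x (σ (nv n (t0+2+s))) - x (σ (nv n (t0+1)))|
        + |x (σ (nv n (t0+1))) - x (σ (nv n (t0+3+s)))| := by
    rw [show t0+3+s = t0+2+s+1 by omega]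
    exact hbet
  exact exchange_sum f hf hf0 (fun i => x (σ (nv n i))) (fun i => w (σ (nv n i)))
    (fun i => hw _) n t0 s hpn hbet'

/-- `j` is an extremal position relative to the suffix of positions `≥ κ`. -/
def IsExt (n : ℕ) (x : Fin (n+1) → ℝ) (σ : Equiv.Perm (Fin (n + 1))) (κ j : Fin (n + 1)) : Prop :=
  (∀ m, κ ≤ m → x (σ j) ≤ x (σ m)) ∨ (∀ m, κ ≤ m → x (σ m) ≤ x (σ j))

lemma ext_transfer {n : ℕ} (x : Fin (n+1) → ℝ) (σ : Equiv.Perm (Fin (n + 1))) {t p : ℕ}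
    (htp : t < p) (hpn : p ≤ n) {κ j : Fin (n + 1)} (hκ : κ.val ≤ t)
    (h : IsExt n x σ κ ((cyc n t p htp hpn) j)) :
    IsExt n x (σ * cyc n t p htp hpn) κ j := by
  have key : ∀ m : Fin (n + 1), κ ≤ m → κ ≤ (cyc n t p htp hpn) m := by
    intro m hm
    rw [Fin.le_def] at hm ⊢
    have h1 := gmap_ge_min (t := t) (p := p) (j := m.val)
    rw [cyc_val]
    omega
  rcases h with h | h
  · left; intro m hm
    simpa [Equiv.Perm.mul_apply] using h _ (key m hm)
  · right; intro m hm
    simpa [Equiv.Perm.mul_apply] using h _ (key m hm)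

lemma crossing (y : ℕ → ℝ) (xv : ℝ) (s e : ℕ) (hse : s ≤ e)
    (hs : y s < xv) (he : xv < y e) :
    ∃ p, s ≤ p ∧ p < e ∧ y p < xv ∧ xv ≤ y (p + 1) := by
  classical
  set T := (Finset.Icc s e).filter (fun j => y j < xv) with hT
  have hsT : s ∈ T := by simp [hT, hse, hs]
  have hne : T.Nonempty := ⟨s, hsT⟩
  set p := T.max' hne with hp
  have hpT : p ∈ T := T.max'_mem hne
  have hp1 : s ≤ p ∧ p ≤ e ∧ y p < xv := by
    have := hpT
    rw [hT, Finset.mem_filter, Finset.mem_Icc] at this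
    exact ⟨this.1.1, this.1.2, this.2⟩
  have hpe : p < e := by
    rcases lt_or_eq_of_le hp1.2.1 with h | h
    · exact h
    · exact absurd (h ▸ hp1.2.2) (not_lt.2 he.le)
  have hnot : p + 1 ∉ T := fun h => by
    have := T.le_max' _ h
    omega
  have hy : ¬ (y (p + 1) < xv) := fun hy => hnot (by
    rw [hT, Finset.mem_filter, Finset.mem_Icc]
    exact ⟨⟨by omega, by omega⟩, hy⟩)
  exact ⟨p, hp1.1, hpe, hp1.2.2, not_lt.1 hy⟩

/-- Zigzag property up to (natural-number) position `k`. -/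
def NProp (n : ℕ) (x : Fin (n+1) → ℝ) (σ : Equiv.Perm (Fin (n + 1))) (k : ℕ) : Prop :=
  ∀ j : ℕ, 1 ≤ j → j ≤ k → IsExt n x σ (nv n j) (nv n j)

lemma descend {n : ℕ} (x w : Fin (n+1) → ℝ) (f : ℝ → ℝ)
    (hw : ∀ v, 0 ≤ w v) (hf : Monotone f) (hf0 : ∀ y, 0 ≤ f y) :
    ∀ d k : ℕ, k + 1 ≤ n → ∀ σ : Equiv.Perm (Fin (n+1)), NProp n x σ k →
    (∃ q : ℕ, k + 1 ≤ q ∧ q ≤ n ∧ q ≤ k + 1 + d ∧ IsExt n x σ (nv n (k+1)) (nv n q)) →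
    ∃ π, ncost n x w f π ≤ ncost n x w f σ ∧ NProp n x π (k+1) := by
  intro d
  induction d with
  | zero =>
    rintro k hk σ hP ⟨q, hq1, hqn, hqd, hqe⟩
    have hq : q = k + 1 := by omega
    subst hq
    refine ⟨σ, le_rfl, ?_⟩
    intro j hj1 hjk
    rcases eq_or_lt_of_le hjk with h | h
    · rw [h]; exact hqe
    · exact hP j hj1 (by omega)
  | succ d ih =>
    rintro k hk σ hP ⟨q, hq1, hqn, hqd, hqe⟩
    by_cases hex : ∃ q' : ℕ, k + 1 ≤ q' ∧ q' ≤ n ∧ q' ≤ k + 1 + d ∧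
        IsExt n x σ (nv n (k+1)) (nv n q')
    · exact ih k hk σ hP hex
    · have hq : q = k + 2 + d := by
        by_contra hq
        exact hex ⟨q, hq1, hqn, by omega, hqe⟩
      subst hq
      have hne : ¬ IsExt n x σ (nv n (k+1)) (nv n (k+1+d)) := fun h =>
        hex ⟨k+1+d, by omega, by omega, by omega, h⟩
      unfold IsExt at hne
      push_neg at hne
      obtain ⟨⟨m1, hm1, hm1x⟩, m2, hm2, hm2x⟩ := hne
      have hSne : ((Finset.univ.filter (fun m : Fin (n+1) => nv n (k+1) ≤ m))).Nonempty :=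
        ⟨nv n (k+1), by simp⟩
      obtain ⟨jmax, hjmaxmem, hjmax⟩ := Finset.exists_max_image _ (fun m => x (σ m)) hSne
      obtain ⟨jmin, hjminmem, hjmin⟩ := Finset.exists_min_image _ (fun m => x (σ m)) hSne
      simp only [Finset.mem_filter, Finset.mem_univ, true_and] at hjmaxmem hjminmem
      replace hjmax : ∀ m, nv n (k+1) ≤ m → x (σ m) ≤ x (σ jmax) := fun m hm =>
        hjmax m (by simp [hm])
      replace hjmin : ∀ m, nv n (k+1) ≤ m → x (σ jmin) ≤ x (σ m) := fun m hm =>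
        hjmin m (by simp [hm])
      have hkv : (nv n (k+1)).val = k+1 := nv_val (by omega)
      have hjmaxlt := jmax.isLt
      have hjminlt := jmin.isLt
      have hjmaxval : k+2+d ≤ jmax.val := by
        by_contra hcon
        refine hex ⟨jmax.val, ?_, by omega, by omega, ?_⟩
        · rw [Fin.le_def, hkv] at hjmaxmem; omega
        · rw [nv_fin]; exact Or.inr hjmax
      have hjminval : k+2+d ≤ jmin.val := by
        by_contra hcon
        refine hex ⟨jmin.val, ?_, by omega, by omega, ?_⟩
        · rw [Fin.le_def, hkv] at hjminmem; omega
        · rw [nv_fin]; exact Or.inl hjmin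
      rcases hqe with hqL | hqR
      · -- the suffix minimum case: walk toward the maximum to find a crossing
        have hsq : x (σ (nv n (k+2+d))) < x (σ (nv n (k+1+d))) :=
          lt_of_le_of_lt (hqL m1 hm1) hm1x
        have hej : x (σ (nv n (k+1+d))) < x (σ (nv n jmax.val)) := by
          rw [nv_fin]; exact lt_of_lt_of_le hm2x (hjmax m2 hm2)
        obtain ⟨p, hp1, hp2, hp3, hp4⟩ := crossing (fun i => x (σ (nv n i)))
          (x (σ (nv n (k+1+d)))) (k+2+d) jmax.val (by omega) hsq hej
        have hpn' : p < n := by omega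
        have htp' : k+1+d < p := by omega
        have h1t' : 1 ≤ k+1+d := by omega
        have hbet : |x (σ (nv n p)) - x (σ (nv n (p+1)))|
            = |x (σ (nv n p)) - x (σ (nv n (k+1+d)))|
              + |x (σ (nv n (k+1+d))) - x (σ (nv n (p+1)))| := by
          rw [abs_of_nonpos (by linarith), abs_of_nonpos (by linarith),
            abs_of_nonpos (by linarith)]
          ring
        have hcost := exchange_cost n x w f hw hf hf0 σ (k+1+d) p h1t' htp' hpn' hbet
        have hP' : NProp n x (σ * cyc n (k+1+d) p htp' hpn'.le) k := by
          intro j hj1 hjk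
          have hjv : (nv n j).val = j := nv_val (by omega)
          refine ext_transfer x σ htp' hpn'.le (by rw [hjv]; omega) ?_
          rw [cyc_of_lt htp' hpn'.le (nv n j) (by rw [hjv]; omega)]
          exact hP j hj1 hjk
        have hNew : IsExt n x (σ * cyc n (k+1+d) p htp' hpn'.le) (nv n (k+1)) (nv n (k+1+d)) := by
          refine ext_transfer x σ htp' hpn'.le (by rw [hkv]; omega) ?_
          have hcv : (cyc n (k+1+d) p htp' hpn'.le) (nv n (k+1+d)) = nv n (k+2+d) := by
            apply Fin.ext
            rw [cyc_val, nv_val (show k+1+d ≤ n by omega), gmap_of_mid le_rfl (by omega),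
              nv_val (show k+2+d ≤ n by omega)]
            omega
          rw [hcv]
          exact Or.inl hqL
        obtain ⟨π, hπc, hπP⟩ := ih k hk (σ * cyc n (k+1+d) p htp' hpn'.le) hP'
          ⟨k+1+d, by omega, by omega, by omega, hNew⟩
        exact ⟨π, le_trans hπc hcost, hπP⟩
      · -- the suffix maximum case: walk toward the minimum to find a crossing
        have hsq : x (σ (nv n (k+1+d))) < x (σ (nv n (k+2+d))) :=
          lt_of_lt_of_le hm2x (hqR m2 hm2)
        have hej : x (σ (nv n jmin.val)) < x (σ (nv n (k+1+d))) := by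
          rw [nv_fin]; exact lt_of_le_of_lt (hjmin m1 hm1) hm1x
        obtain ⟨p, hp1, hp2, hp3, hp4⟩ := crossing (fun i => -x (σ (nv n i)))
          (-x (σ (nv n (k+1+d)))) (k+2+d) jmin.val (by omega)
          (by simpa using hsq) (by simpa using hej)
        have hpn' : p < n := by omega
        have htp' : k+1+d < p := by omega
        have h1t' : 1 ≤ k+1+d := by omega
        have hbet : |x (σ (nv n p)) - x (σ (nv n (p+1)))|
            = |x (σ (nv n p)) - x (σ (nv n (k+1+d)))|
              + |x (σ (nv n (k+1+d))) - x (σ (nv n (p+1)))| := by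
          rw [abs_of_nonneg (by linarith), abs_of_nonneg (by linarith),
            abs_of_nonneg (by linarith)]
          ring
        have hcost := exchange_cost n x w f hw hf hf0 σ (k+1+d) p h1t' htp' hpn' hbet
        have hP' : NProp n x (σ * cyc n (k+1+d) p htp' hpn'.le) k := by
          intro j hj1 hjk
          have hjv : (nv n j).val = j := nv_val (by omega)
          refine ext_transfer x σ htp' hpn'.le (by rw [hjv]; omega) ?_
          rw [cyc_of_lt htp' hpn'.le (nv n j) (by rw [hjv]; omega)]
          exact hP j hj1 hjk
        have hNew : IsExt n x (σ * cyc n (k+1+d) p htp' hpn'.le) (nv n (k+1)) (nv n (k+1+d)) := by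
          refine ext_transfer x σ htp' hpn'.le (by rw [hkv]; omega) ?_
          have hcv : (cyc n (k+1+d) p htp' hpn'.le) (nv n (k+1+d)) = nv n (k+2+d) := by
            apply Fin.ext
            rw [cyc_val, nv_val (show k+1+d ≤ n by omega), gmap_of_mid le_rfl (by omega),
              nv_val (show k+2+d ≤ n by omega)]
            omega
          rw [hcv]
          exact Or.inr hqR
        obtain ⟨π, hπc, hπP⟩ := ih k hk (σ * cyc n (k+1+d) p htp' hpn'.le) hP'
          ⟨k+1+d, by omega, by omega, by omega, hNew⟩
        exact ⟨π, le_trans hπc hcost, hπP⟩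

lemma main {n : ℕ} (x w : Fin (n+1) → ℝ) (f : ℝ → ℝ)
    (hw : ∀ v, 0 ≤ w v) (hf : Monotone f) (hf0 : ∀ y, 0 ≤ f y) :
    ∀ k : ℕ, k ≤ n → ∀ σ : Equiv.Perm (Fin (n+1)),
      ∃ π, ncost n x w f π ≤ ncost n x w f σ ∧ NProp n x π k := by
  intro k
  induction k with
  | zero => exact fun _ σ => ⟨σ, le_rfl, fun j hj1 hj0 => absurd hj0 (by omega)⟩
  | succ k ih =>
    intro hk σ
    obtain ⟨π1, h1, hP1⟩ := ih (by omega) σ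
    have hSne : ((Finset.univ.filter (fun m : Fin (n+1) => nv n (k+1) ≤ m))).Nonempty :=
      ⟨nv n (k+1), by simp⟩
    obtain ⟨jmax, hjmaxmem, hjmax⟩ := Finset.exists_max_image _ (fun m => x (π1 m)) hSne
    simp only [Finset.mem_filter, Finset.mem_univ, true_and] at hjmaxmem
    have hkv : (nv n (k+1)).val = k+1 := nv_val (by omega)
    have hjlt := jmax.isLt
    have hjb : k+1 ≤ jmax.val := by rw [Fin.le_def, hkv] at hjmaxmem; exact hjmaxmem
    have hExt : IsExt n x π1 (nv n (k+1)) (nv n jmax.val) := by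
      rw [nv_fin]; exact Or.inr (fun m hm => hjmax m (by simp [hm]))
    obtain ⟨π, hc, hP⟩ := descend x w f hw hf hf0 (n - (k+1)) k hk π1 hP1
      ⟨jmax.val, hjb, by omega, by omega, hExt⟩
    exact ⟨π, le_trans hc h1, hP⟩

end Stmt7Aux

/-- On a path metric there is an optimal W-TSP tour that, at every step after the start,
next visits either the leftmost or the rightmost of the remaining unvisited nodes. -/
theorem stmt_7 (n : ℕ) (x w : Fin (n + 1) → ℝ) (hx : Monotone x) (hw : ∀ v, 0 ≤ w v)
    (f : ℝ → ℝ) (hf : Monotone f) (hf0 : ∀ y, 0 ≤ f y) :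
    ∃ π : Equiv.Perm (Fin (n + 1)),
      (∀ σ : Equiv.Perm (Fin (n + 1)), pathTourCost n x w f π ≤ pathTourCost n x w f σ) ∧
      ∀ k : Fin (n + 1), 0 < k →
        ((∀ m, k ≤ m → x (π k) ≤ x (π m)) ∨ (∀ m, k ≤ m → x (π m) ≤ x (π k))) := by
  classical
  obtain ⟨π₀, -, hmin⟩ := Finset.exists_min_image (Finset.univ : Finset (Equiv.Perm (Fin (n+1))))
    (Stmt7Aux.ncost n x w f) ⟨1, Finset.mem_univ 1⟩
  obtain ⟨π, hc, hP⟩ := Stmt7Aux.main x w f hw hf hf0 n le_rfl π₀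
  refine ⟨π, ?_, ?_⟩
  · intro σ
    rw [Stmt7Aux.pathTourCost_eq_ncost, Stmt7Aux.pathTourCost_eq_ncost]
    exact le_trans hc (hmin σ (Finset.mem_univ σ))
  · intro k hk
    have h1 : 1 ≤ k.val := by
      rw [Fin.lt_def, Fin.val_zero] at hk
      omega
    have h2 := hP k.val h1 (by omega)
    rw [Stmt7Aux.nv_fin] at h2
    exact h2
end

section
/- Exchanging a prematurely visited node does not increase tour cost: let π be a tour on a path metric visiting node v_j before both v_i (to its left) and v_k (to its right), where v_k is the last node right of v_j visited by π and v_i is visited immediately after v_k. Let π' be obtained from π by deleting the original visit of v_j and inserting v_j immediately after v_k. If f is nondecreasing and all weights are nonnegative, then T(π') ≤ T(π). -/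
open Fin.NatCast

namespace Stmt8Aux

noncomputable def W (n : ℕ) (w : Fin (n+1) → ℝ) (σ : Equiv.Perm (Fin (n+1))) (r : ℕ) : ℝ :=
  ∑ j ∈ Finset.Ioc 0 r, w (σ (j : Fin (n+1)))

lemma W_succ (n : ℕ) (w : Fin (n+1) → ℝ) (σ : Equiv.Perm (Fin (n+1))) (r : ℕ) :
    W n w σ (r+1) = W n w σ r + w (σ ((r+1 : ℕ) : Fin (n+1))) := by
  unfold W; rw [Finset.sum_Ioc_succ_top (Nat.zero_le r)]

lemma W_mono (n : ℕ) (w : Fin (n+1) → ℝ) (hw : ∀ v, 0 ≤ w v)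
    (σ : Equiv.Perm (Fin (n+1))) {r s : ℕ} (h : r ≤ s) :
    W n w σ r ≤ W n w σ s :=
  Finset.sum_le_sum_of_subset_of_nonneg (Finset.Ioc_subset_Ioc_right h)
    (fun _ _ _ => hw _)

lemma finIoc_sum (n : ℕ) (w : Fin (n+1) → ℝ) (σ : Equiv.Perm (Fin (n+1)))
    (b : Fin (n+1)) :
    ∑ j ∈ Finset.Ioc (0 : Fin (n+1)) b, w (σ j) = W n w σ b.val := by
  unfold W
  have h0 : ((0 : Fin (n+1)) : ℕ) = 0 := rfl
  conv_rhs => rw [← h0]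
  rw [← Fin.map_valEmbedding_Ioc, Finset.sum_map]
  refine Finset.sum_congr rfl fun j _ => ?_
  simp [Fin.cast_val_eq_self]

lemma cast_eq_mk (n : ℕ) (r : ℕ) (h : r < n + 1) :
    ((r : ℕ) : Fin (n+1)) = ⟨r, h⟩ := by
  ext; simp [Fin.val_natCast, Nat.mod_eq_of_lt h]

lemma cost_eq (n : ℕ) (x w : Fin (n + 1) → ℝ) (f : ℝ → ℝ)
    (σ : Equiv.Perm (Fin (n + 1))) :
    pathTourCost n x w f σ =
      (∑ r ∈ Finset.range n,
        f (W n w σ r) * |x (σ (r : Fin (n+1))) - x (σ ((r+1 : ℕ) : Fin (n+1)))|) +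
      f (W n w σ n) * |x (σ ((n : ℕ) : Fin (n+1))) - x (σ 0)| := by
  unfold pathTourCost
  have hlast : ((n : ℕ) : Fin (n+1)) = Fin.last n := by
    ext; simp [Fin.val_natCast, Nat.mod_eq_of_lt (Nat.lt_succ_self n)]
  congr 1
  · rw [← Fin.sum_univ_eq_sum_range
      (fun r => f (W n w σ r) * |x (σ (r : Fin (n+1))) - x (σ ((r+1 : ℕ) : Fin (n+1)))|) n]
    refine Finset.sum_congr rfl fun i _ => ?_
    have h1 : ((i.val : ℕ) : Fin (n+1)) = i.castSucc := by
      rw [cast_eq_mk n i.val (by omega)]; rfl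
    have h2 : ((i.val + 1 : ℕ) : Fin (n+1)) = i.succ := by
      rw [cast_eq_mk n (i.val+1) (by omega)]; rfl
    rw [finIoc_sum, h1, h2]
    rfl
  · rw [finIoc_sum, hlast]
    rfl

lemma key_sum (A B : ℕ → ℝ) (a c m n : ℕ) (hn : n = a+3+c+m)
    (h_lo : ∀ r, r < a → A r = B r)
    (h_hi : ∀ r, a+3+c ≤ r → r < n → A r = B r)
    (h_mid : ∀ i, i < c → A (a+1+i) ≤ B (a+2+i))
    (h_a : A a ≤ B a + B (a+1))
    (h_q : A (a+1+c) + A (a+2+c) ≤ B (a+2+c)) :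
    ∑ r ∈ Finset.range n, A r ≤ ∑ r ∈ Finset.range n, B r := by
  subst hn
  rw [Finset.range_eq_Ico,
    ← Finset.sum_Ico_consecutive A (Nat.zero_le a) (show a ≤ a+3+c+m by omega),
    ← Finset.sum_Ico_consecutive B (Nat.zero_le a) (show a ≤ a+3+c+m by omega),
    ← Finset.sum_Ico_consecutive A (show a ≤ a+3+c by omega) (show a+3+c ≤ a+3+c+m by omega),
    ← Finset.sum_Ico_consecutive B (show a ≤ a+3+c by omega) (show a+3+c ≤ a+3+c+m by omega)]
  have eq_lo : ∑ r ∈ Finset.Ico 0 a, A r = ∑ r ∈ Finset.Ico 0 a, B r :=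
    Finset.sum_congr rfl fun r hr => h_lo r (Finset.mem_Ico.mp hr).2
  have eq_hi : ∑ r ∈ Finset.Ico (a+3+c) (a+3+c+m), A r
      = ∑ r ∈ Finset.Ico (a+3+c) (a+3+c+m), B r :=
    Finset.sum_congr rfl fun r hr =>
      h_hi r (Finset.mem_Ico.mp hr).1 (Finset.mem_Ico.mp hr).2
  have mid : ∑ r ∈ Finset.Ico a (a+3+c), A r ≤ ∑ r ∈ Finset.Ico a (a+3+c), B r := by
    rw [Finset.sum_Ico_eq_sum_range, Finset.sum_Ico_eq_sum_range,
      show a+3+c-a = c+1+1+1 from by omega]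
    rw [Finset.sum_range_succ, Finset.sum_range_succ, Finset.sum_range_succ',
      Finset.sum_range_succ (fun i => B (a+i)) (c+1+1), Finset.sum_range_succ',
      Finset.sum_range_succ']
    have t1 : ∑ i ∈ Finset.range c, A (a+(i+1)) ≤ ∑ i ∈ Finset.range c, B (a+(i+1+1)) := by
      refine Finset.sum_le_sum fun i _hi => ?_
      rw [show a+(i+1) = a+1+i from by omega, show a+(i+1+1) = a+2+i from by omega]
      exact h_mid i (Finset.mem_range.mp _hi)
    rw [show a+(c+1) = a+1+c from by omega, show a+(c+1+1) = a+2+c from by omega,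
      show a+(0+1) = a+1 from by omega, Nat.add_zero]
    linarith
  linarith

end Stmt8Aux

set_option maxHeartbeats 1000000 in
/-- Exchange argument: deleting the premature visit of `v_j` (at position `p`) and
re-inserting `v_j` immediately after `v_k` (at position `q`) does not increase the
tour cost, when `x vi ≤ x vj ≤ x vk`, `v_k` is the last node right of `v_j` visited by
`π`, `v_i` is visited immediately after `v_k`, `f` is nondecreasing and weights are
nonnegative. -/
theorem stmt_8 (n : ℕ) (x w : Fin (n + 1) → ℝ) (hw : ∀ v, 0 ≤ w v)
    (f : ℝ → ℝ) (hf : Monotone f) (hf0 : ∀ y, 0 ≤ f y)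
    (π π' : Equiv.Perm (Fin (n + 1)))
    (vi vj vk : Fin (n + 1)) (hij : x vi ≤ x vj) (hjk : x vj ≤ x vk)
    (p q : Fin (n + 1)) (hp0 : 0 < p) (hpq : p < q) (hq : q.val + 1 ≤ n)
    (hπp : π p = vj) (hπq : π q = vk)
    (hπq1 : π ⟨q.val + 1, by omega⟩ = vi)
    (hlastright : ∀ r : Fin (n + 1), q < r → x (π r) ≤ x vj)
    (hπ' : ∀ r : Fin (n + 1), π' r =
      if r < p then π r
      else if h : r.val < q.val then π ⟨r.val + 1, by have := q.isLt; omega⟩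
      else if r = q then vj
      else π r) :
    pathTourCost n x w f π' ≤ pathTourCost n x w f π := by
  clear hlastright
  have hP1 : 1 ≤ p.val := by
    have := hp0; rw [Fin.lt_def, Fin.val_zero] at this; omega
  have hPQ : p.val < q.val := by rw [Fin.lt_def] at hpq; exact hpq
  obtain ⟨a, c, m, hP, hQ, hn⟩ :
      ∃ a c m, p.val = a + 1 ∧ q.val = a + 2 + c ∧ n = a + 3 + c + m :=
    ⟨p.val - 1, q.val - p.val - 1, n - q.val - 1, by omega, by omega, by omega⟩
  have hcast : ∀ r : ℕ, r ≤ n → ((r : ℕ) : Fin (n+1)).val = r := fun r hr => by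
    simp [Fin.val_natCast, Nat.mod_eq_of_lt (show r < n+1 by omega)]
  -- values of π' at natural indices
  have hval : ∀ r : ℕ, r ≤ n →
      π' ((r : ℕ) : Fin (n+1)) =
        if r < p.val then π ((r : ℕ) : Fin (n+1))
        else if r < q.val then π ((r+1 : ℕ) : Fin (n+1))
        else if r = q.val then vj
        else π ((r : ℕ) : Fin (n+1)) := by
    intro r hr
    rw [hπ' _]
    have h1 : (((r : ℕ) : Fin (n+1)) < p) ↔ r < p.val := by
      rw [Fin.lt_def, hcast r hr]
    have h2 : ((((r : ℕ) : Fin (n+1)) : ℕ) < q.val) ↔ r < q.val := by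
      rw [hcast r hr]
    have h3 : (((r : ℕ) : Fin (n+1)) = q) ↔ r = q.val := by
      rw [Fin.ext_iff, hcast r hr]
    by_cases hrP : r < p.val
    · rw [if_pos (h1.mpr hrP), if_pos hrP]
    · rw [if_neg (fun h => hrP (h1.mp h)), if_neg hrP]
      by_cases hrQ : r < q.val
      · rw [dif_pos (h2.mpr hrQ), if_pos hrQ]
        congr 1
        have hc : ((r : Fin (n+1)) : ℕ) = r := hcast r hr
        simp only [hc]
        rw [Stmt8Aux.cast_eq_mk n (r+1) (by omega)]
      · rw [dif_neg (fun h => hrQ (h2.mp h)), if_neg hrQ]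
        by_cases hrQ' : r = q.val
        · rw [if_pos (h3.mpr hrQ'), if_pos hrQ']
        · rw [if_neg (fun h => hrQ' (h3.mp h)), if_neg hrQ']
  have hv_lt : ∀ r, r < p.val → π' ((r : ℕ) : Fin (n+1)) = π ((r : ℕ) : Fin (n+1)) :=
    fun r h => by rw [hval r (by omega), if_pos h]
  have hv_mid : ∀ r, p.val ≤ r → r < q.val →
      π' ((r : ℕ) : Fin (n+1)) = π ((r+1 : ℕ) : Fin (n+1)) :=
    fun r h1 h2 => by rw [hval r (by omega), if_neg (by omega), if_pos h2]
  have hv_Q : π' ((q.val : ℕ) : Fin (n+1)) = vj := by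
    rw [hval q.val (by omega), if_neg (by omega), if_neg (by omega), if_pos rfl]
  have hv_gt : ∀ r, q.val < r → r ≤ n →
      π' ((r : ℕ) : Fin (n+1)) = π ((r : ℕ) : Fin (n+1)) :=
    fun r h1 h2 => by
      rw [hval r h2, if_neg (by omega), if_neg (by omega), if_neg (by omega)]
  -- key node values
  have hπP : π ((p.val : ℕ) : Fin (n+1)) = vj := by
    rw [Fin.cast_val_eq_self]; exact hπp
  have hπQ : π ((q.val : ℕ) : Fin (n+1)) = vk := by
    rw [Fin.cast_val_eq_self]; exact hπq
  have hπQ1 : π ((q.val + 1 : ℕ) : Fin (n+1)) = vi := by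
    rw [Stmt8Aux.cast_eq_mk n (q.val+1) (by omega)]; exact hπq1
  -- accumulated weights
  have hW_lt : ∀ r, r < p.val → Stmt8Aux.W n w π' r = Stmt8Aux.W n w π r := by
    intro r h
    unfold Stmt8Aux.W
    refine Finset.sum_congr rfl fun j hj => ?_
    have hj' := Finset.mem_Ioc.mp hj
    rw [hv_lt j (by omega)]
  have hW_mid : ∀ r, p.val ≤ r → r < q.val →
      Stmt8Aux.W n w π' r = Stmt8Aux.W n w π (r+1) - w vj := by
    intro r hr
    induction r, hr using Nat.le_induction with
    | base =>
      intro hlt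
      rw [hP]
      rw [Stmt8Aux.W_succ n w π' a, Stmt8Aux.W_succ n w π (a+1), Stmt8Aux.W_succ n w π a]
      rw [hW_lt a (by omega)]
      rw [hv_mid (a+1) (by omega) (by omega)]
      have hvj : π ((a+1 : ℕ) : Fin (n+1)) = vj := by rw [← hP]; exact hπP
      rw [hvj]; ring
    | succ r hr ih =>
      intro hlt
      rw [Stmt8Aux.W_succ n w π' r, Stmt8Aux.W_succ n w π (r+1),
        ih (by omega), hv_mid (r+1) (by omega) hlt]
      ring
  have hW_ge : ∀ r, q.val ≤ r → r ≤ n →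
      Stmt8Aux.W n w π' r = Stmt8Aux.W n w π r := by
    intro r hr
    induction r, hr using Nat.le_induction with
    | base =>
      intro _
      rw [hQ, show a+2+c = (a+1+c)+1 from by omega]
      rw [Stmt8Aux.W_succ n w π' (a+1+c), Stmt8Aux.W_succ n w π (a+1+c)]
      rw [hW_mid (a+1+c) (by omega) (by omega)]
      have hvj : π' (((a+1+c)+1 : ℕ) : Fin (n+1)) = vj := by
        rw [show (a+1+c)+1 = q.val from by omega]; exact hv_Q
      rw [hvj, Stmt8Aux.W_succ n w π (a+1+c)]
      ring
    | succ r hr ih =>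
      intro hrn
      rw [Stmt8Aux.W_succ n w π' r, Stmt8Aux.W_succ n w π r, ih (by omega),
        hv_gt (r+1) (by omega) hrn]
  -- rewrite cost and compare
  rw [Stmt8Aux.cost_eq, Stmt8Aux.cost_eq]
  have hclose1 : Stmt8Aux.W n w π' n = Stmt8Aux.W n w π n := hW_ge n (by omega) le_rfl
  have hclose2 : π' ((n : ℕ) : Fin (n+1)) = π ((n : ℕ) : Fin (n+1)) :=
    hv_gt n (by omega) le_rfl
  have hclose3 : π' 0 = π 0 := by
    have h0 := hv_lt 0 (by omega); rwa [Nat.cast_zero] at h0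
  rw [hclose1, hclose2, hclose3]
  refine add_le_add ?_ le_rfl
  refine Stmt8Aux.key_sum _ _ a c m n hn ?_ ?_ ?_ ?_ ?_
  · -- low range: identical
    intro r hr
    rw [hW_lt r (by omega), hv_lt r (by omega), hv_lt (r+1) (by omega)]
  · -- high range: identical
    intro r hr1 hr2
    rw [hW_ge r (by omega) (by omega), hv_gt r (by omega) (by omega),
      hv_gt (r+1) (by omega) (by omega)]
  · -- middle shifted terms
    intro i hi
    rw [hW_mid (a+1+i) (by omega) (by omega),
      hv_mid (a+1+i) (by omega) (by omega),
      hv_mid (a+1+i+1) (by omega) (by omega),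
      show a+1+i+1 = a+2+i from by omega]
    have h1 : Stmt8Aux.W n w π (a+2+i) - w vj ≤ Stmt8Aux.W n w π (a+2+i) := by
      have := hw vj; linarith
    exact mul_le_mul_of_nonneg_right (hf h1) (abs_nonneg _)
  · -- the split at a = p.val - 1 : triangle inequality step
    rw [hW_lt a (by omega), hv_lt a (by omega), hv_mid (a+1) (by omega) (by omega),
      show a+1+1 = a+2 from by omega]
    have tri : |x (π ((a : ℕ) : Fin (n+1))) - x (π ((a+2 : ℕ) : Fin (n+1)))| ≤
        |x (π ((a : ℕ) : Fin (n+1))) - x (π ((a+1 : ℕ) : Fin (n+1)))| +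
        |x (π ((a+1 : ℕ) : Fin (n+1))) - x (π ((a+2 : ℕ) : Fin (n+1)))| :=
      abs_sub_le _ _ _
    have mono : f (Stmt8Aux.W n w π a) ≤ f (Stmt8Aux.W n w π (a+1)) :=
      hf (Stmt8Aux.W_mono n w hw π (by omega))
    have h1 := mul_le_mul_of_nonneg_left tri (hf0 (Stmt8Aux.W n w π a))
    have h2 := mul_le_mul_of_nonneg_right mono
      (abs_nonneg (x (π ((a+1 : ℕ) : Fin (n+1))) - x (π ((a+2 : ℕ) : Fin (n+1)))))
    nlinarith [h1, h2]
  · -- merging the two new edges at vj into the old edge vk → vi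
    rw [hW_mid (a+1+c) (by omega) (by omega), hv_mid (a+1+c) (by omega) (by omega),
      show a+1+c+1 = a+2+c from by omega,
      hW_ge (a+2+c) (by omega) (by omega)]
    have hvk : π ((a+2+c : ℕ) : Fin (n+1)) = vk := by rw [← hQ]; exact hπQ
    have hvj' : π' ((a+2+c : ℕ) : Fin (n+1)) = vj := by rw [← hQ]; exact hv_Q
    have hvi' : π' ((a+2+c+1 : ℕ) : Fin (n+1)) = π ((a+2+c+1 : ℕ) : Fin (n+1)) :=
      hv_gt _ (by omega) (by omega)
    have hvi : π ((a+2+c+1 : ℕ) : Fin (n+1)) = vi := by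
      rw [show a+2+c+1 = q.val+1 from by omega]; exact hπQ1
    rw [hvk, hvj', hvi', hvi]
    rw [abs_of_nonneg (show (0:ℝ) ≤ x vk - x vj by linarith),
      abs_of_nonneg (show (0:ℝ) ≤ x vj - x vi by linarith),
      abs_of_nonneg (show (0:ℝ) ≤ x vk - x vi by linarith)]
    have hmono : f (Stmt8Aux.W n w π (a+2+c) - w vj) ≤ f (Stmt8Aux.W n w π (a+2+c)) :=
      hf (by have := hw vj; linarith)
    have hstep := mul_le_mul_of_nonneg_right hmono (sub_nonneg.mpr hjk)
    have expand : f (Stmt8Aux.W n w π (a+2+c)) * (x vk - x vi) =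
        f (Stmt8Aux.W n w π (a+2+c)) * (x vk - x vj) +
        f (Stmt8Aux.W n w π (a+2+c)) * (x vj - x vi) := by ring
    linarith [hstep, expand]
end

section
/- Let g(v_i, v_j, s, t) denote the minimum cost of collecting all nodes in interval [v_i, v_j] of a path, starting at s ∈ {v_i, v_j} (whose weight is already collected), ending by traveling to t, where the weight collected before entering [v_i, v_j] is w = ∑_{ℓ<i} w_ℓ + ∑_{ℓ>j} w_ℓ, restricted to tours that always next visit the leftmost or rightmost remaining node. Then for i < j and s = v_i: g(v_i,v_j,v_i,t) = min( f(w+w_i)·d(v_i,v_{i+1}) + g(v_{i+1},v_j,v_{i+1},t), f(w+w_i)·d(v_i,v_j) + g(v_{i+1},v_j,v_j,t) ), and symmetrically for s = v_j. -/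
/-- Cost of the restricted tour on the interval `[i, j]` of a path determined by the
choice sequence `bs` (`true` = next go to the leftmost remaining node, `false` = to the
rightmost). State: current interval `[i, j]`, current node `cur ∈ {i, j}` whose weight
has just been collected, `acc` = weight collected outside `[i,j]` plus previously
collected interval nodes except `cur`. When the interval is exhausted, travel to the
end node at coordinate `xt` carrying the total weight `Wtot` of all nodes. -/
noncomputable def restrictedCost (f : ℝ → ℝ) (x w : ℕ → ℝ) (xt Wtot : ℝ) :
    ℕ → ℕ → ℕ → ℝ → List Bool → ℝ
  | _, _, cur, _, [] => |x cur - xt| * f Wtot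
  | i, j, cur, acc, b :: bs =>
      if cur = i then
        let nxt : ℕ := if b then i + 1 else j
        f (acc + w i) * |x i - x nxt| + restrictedCost f x w xt Wtot (i + 1) j nxt (acc + w i) bs
      else
        let nxt : ℕ := if b then i else j - 1
        f (acc + w j) * |x j - x nxt| + restrictedCost f x w xt Wtot i (j - 1) nxt (acc + w j) bs

/-- `g(v_i, v_j, s, t)`: minimum cost, over all restricted (leftmost-or-rightmost) tours,
of collecting all nodes of `[i, j]` starting at `cur ∈ {i, j}` with outside weight `acc`,
ending at the node with coordinate `xt`. -/
noncomputable def gDP (f : ℝ → ℝ) (x w : ℕ → ℝ) (xt Wtot : ℝ) (i j cur : ℕ) (acc : ℝ) : ℝ :=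
  sInf ((fun bs => restrictedCost f x w xt Wtot i j cur acc bs) ''
    { bs : List Bool | bs.length = j - i })

lemma sInf_const_add (c : ℝ) (S : Set ℝ) (hS : S.Nonempty) (hb : BddBelow S) :
    sInf ((fun y => c + y) '' S) = c + sInf S := by
  obtain ⟨m, hm⟩ := hb
  have hbi : BddBelow ((fun y => c + y) '' S) := ⟨c + m, by
    rintro _ ⟨y, hy, rfl⟩; exact (add_le_add_iff_left c).mpr (hm hy)⟩
  apply le_antisymm
  · have h1 : sInf ((fun y => c + y) '' S) - c ≤ sInf S := by
      apply le_csInf hS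
      intro y hy
      have : sInf ((fun y => c + y) '' S) ≤ c + y := csInf_le hbi ⟨y, hy, rfl⟩
      linarith
    linarith
  · apply le_csInf (hS.image _)
    rintro _ ⟨y, hy, rfl⟩
    exact (add_le_add_iff_left c).mpr (csInf_le ⟨m, hm⟩ hy)

lemma cons_split (k : ℕ) :
    {bs : List Bool | bs.length = k + 1}
      = (List.cons true '' {bs | bs.length = k}) ∪ (List.cons false '' {bs | bs.length = k}) := by
  ext bs
  cases bs with
  | nil => simp
  | cons b t => cases b <;> simp [Set.mem_union, Set.mem_image]

lemma sInf_cons_split (G G1 G2 : List Bool → ℝ) (c1 c2 : ℝ) (k : ℕ)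
    (hG1 : ∀ bs, G (true :: bs) = c1 + G1 bs)
    (hG2 : ∀ bs, G (false :: bs) = c2 + G2 bs)
    (h1 : ∀ bs, 0 ≤ G1 bs) (h2 : ∀ bs, 0 ≤ G2 bs) :
    sInf (G '' {bs | bs.length = k + 1}) =
      min (c1 + sInf (G1 '' {bs | bs.length = k})) (c2 + sInf (G2 '' {bs | bs.length = k})) := by
  have hS : ({bs : List Bool | bs.length = k} : Set (List Bool)).Nonempty :=
    ⟨List.replicate k true, by simp⟩
  have e1 : G '' (List.cons true '' {bs | bs.length = k})
      = (fun y => c1 + y) '' (G1 '' {bs | bs.length = k}) := by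
    rw [Set.image_image, Set.image_image]; exact Set.image_congr fun bs _ => hG1 bs
  have e2 : G '' (List.cons false '' {bs | bs.length = k})
      = (fun y => c2 + y) '' (G2 '' {bs | bs.length = k}) := by
    rw [Set.image_image, Set.image_image]; exact Set.image_congr fun bs _ => hG2 bs
  have hb1 : BddBelow (G1 '' {bs : List Bool | bs.length = k}) :=
    ⟨0, by rintro _ ⟨bs, _, rfl⟩; exact h1 bs⟩
  have hb2 : BddBelow (G2 '' {bs : List Bool | bs.length = k}) :=
    ⟨0, by rintro _ ⟨bs, _, rfl⟩; exact h2 bs⟩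
  have hbi1 : BddBelow ((fun y => c1 + y) '' (G1 '' {bs : List Bool | bs.length = k})) :=
    ⟨c1, by rintro _ ⟨y, ⟨bs, _, rfl⟩, rfl⟩; exact le_add_of_nonneg_right (h1 bs)⟩
  have hbi2 : BddBelow ((fun y => c2 + y) '' (G2 '' {bs : List Bool | bs.length = k})) :=
    ⟨c2, by rintro _ ⟨y, ⟨bs, _, rfl⟩, rfl⟩; exact le_add_of_nonneg_right (h2 bs)⟩
  rw [cons_split, Set.image_union, e1, e2,
    csInf_union hbi1 ((hS.image _).image _) hbi2 ((hS.image _).image _),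
    sInf_const_add _ _ (hS.image _) hb1, sInf_const_add _ _ (hS.image _) hb2]

lemma restrictedCost_nonneg (f : ℝ → ℝ) (hf0 : ∀ y, 0 ≤ f y) (x w : ℕ → ℝ) (xt Wtot : ℝ) :
    ∀ (bs : List Bool) (i j cur : ℕ) (acc : ℝ),
      0 ≤ restrictedCost f x w xt Wtot i j cur acc bs := by
  intro bs
  induction bs with
  | nil =>
      intro i j cur acc
      simp only [restrictedCost]
      exact mul_nonneg (abs_nonneg _) (hf0 _)
  | cons b t ih =>
      intro i j cur acc
      simp only [restrictedCost]
      split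
      · exact add_nonneg (mul_nonneg (hf0 _) (abs_nonneg _)) (ih _ _ _ _)
      · exact add_nonneg (mul_nonneg (hf0 _) (abs_nonneg _)) (ih _ _ _ _)

/-- Bellman recurrence of the path-metric DP: for `i < j`, from `s = v_i` the optimum
either moves to the adjacent node `v_{i+1}` or to the opposite end `v_j`, and
symmetrically from `s = v_j`; the outside weight is `w = ∑_{ℓ<i} w_ℓ + ∑_{ℓ>j} w_ℓ`. -/
theorem stmt_9 (n : ℕ) (x w : ℕ → ℝ) (hx : Monotone x) (hw : ∀ ℓ, 0 ≤ w ℓ)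
    (f : ℝ → ℝ) (hf : Monotone f) (hf0 : ∀ y, 0 ≤ f y) (xt : ℝ)
    (Wtot : ℝ) (hWtot : Wtot = ∑ ℓ ∈ Finset.range n, w ℓ)
    (i j : ℕ) (hij : i < j) (hjn : j < n)
    (acc : ℝ) (hacc : acc = (∑ ℓ ∈ Finset.range i, w ℓ) + ∑ ℓ ∈ Finset.Ioo j n, w ℓ) :
    gDP f x w xt Wtot i j i acc =
      min (f (acc + w i) * |x i - x (i + 1)| + gDP f x w xt Wtot (i + 1) j (i + 1) (acc + w i))
          (f (acc + w i) * |x i - x j| + gDP f x w xt Wtot (i + 1) j j (acc + w i)) ∧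
    gDP f x w xt Wtot i j j acc =
      min (f (acc + w j) * |x j - x (j - 1)| + gDP f x w xt Wtot i (j - 1) (j - 1) (acc + w j))
          (f (acc + w j) * |x j - x i| + gDP f x w xt Wtot i (j - 1) i (acc + w j)) := by
  have hji : j ≠ i := Nat.ne_of_gt hij
  obtain ⟨k, hk⟩ : ∃ k, j - i = k + 1 := ⟨j - i - 1, by omega⟩
  have hk2 : j - (i + 1) = k := by omega
  have hk3 : j - 1 - i = k := by omega
  constructor
  · unfold gDP
    rw [hk, hk2]
    exact sInf_cons_split _ _ _ _ _ k
      (fun bs => by simp [restrictedCost])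
      (fun bs => by simp [restrictedCost])
      (fun bs => restrictedCost_nonneg f hf0 x w xt Wtot bs _ _ _ _)
      (fun bs => restrictedCost_nonneg f hf0 x w xt Wtot bs _ _ _ _)
  · unfold gDP
    rw [hk, hk3, min_comm]
    exact sInf_cons_split _ _ _ _ _ k
      (fun bs => by simp [restrictedCost, hji])
      (fun bs => by simp [restrictedCost, hji])
      (fun bs => restrictedCost_nonneg f hf0 x w xt Wtot bs _ _ _ _)
      (fun bs => restrictedCost_nonneg f hf0 x w xt Wtot bs _ _ _ _)
end

section
/- For the star-metric W-TSP, let π* be an optimal tour and π any tour, both starting and ending at the center. If D^π(w) ≤ c·D^{π*}(w) for every weight threshold w, then the total cost T(π) ≤ 2c·T(π*). -/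
/-- `D^σ(w')` for a star tour `σ` (see stmt_11). -/
noncomputable def Dthresh (N : ℕ) (d wt : Fin N → ℝ) (σ : Equiv.Perm (Fin N)) (w' : ℝ) : ℝ :=
  ∑ k ∈ Finset.univ.filter (fun k : Fin N => w' ≤ ∑ j ∈ Finset.Iic k, wt (σ j)),
    2 * d (σ k)

/-- Total cost of a star tour `σ` starting and ending at the center: each leaf is visited
by a round trip of length `2·d v`, charged at rate `f` of the accumulated weight on the
return leg. -/
noncomputable def Tstar (N : ℕ) (d wt : Fin N → ℝ) (f : ℝ → ℝ) (σ : Equiv.Perm (Fin N)) : ℝ :=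
  ∑ k : Fin N, 2 * d (σ k) * f (∑ j ∈ Finset.Iic k, wt (σ j))

/-- If `D^π(w') ≤ c·D^{π*}(w')` for every threshold `w'`, where `π*` is an optimal star
tour, then `T(π) ≤ 2c·T(π*)`. -/
theorem stmt_12 (N : ℕ) (d wt : Fin N → ℝ) (hd : ∀ v, 1 ≤ d v) (hw : ∀ v, 0 ≤ wt v)
    (f : ℝ → ℝ) (hf : Monotone f) (hf0 : ∀ y, 0 ≤ f y)
    (π πstar : Equiv.Perm (Fin N))
    (hopt : ∀ σ : Equiv.Perm (Fin N), Tstar N d wt f πstar ≤ Tstar N d wt f σ)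
    (c : ℝ) (hc : ∀ w' : ℝ, Dthresh N d wt π w' ≤ c * Dthresh N d wt πstar w') :
    Tstar N d wt f π ≤ 2 * c * Tstar N d wt f πstar := by
  classical
  rcases Nat.eq_zero_or_pos N with rfl | hN
  · simp [Tstar]
  -- accumulated weight as a function of a natural index
  set W : Equiv.Perm (Fin N) → ℕ → ℝ :=
    fun σ n => ∑ j ∈ Finset.univ.filter (fun j : Fin N => (j : ℕ) ≤ n), wt (σ j) with hWdef
  have hIic : ∀ (σ : Equiv.Perm (Fin N)) (k : Fin N),
      ∑ j ∈ Finset.Iic k, wt (σ j) = W σ (k : ℕ) := by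
    intro σ k
    refine Finset.sum_congr ?_ (fun _ _ => rfl)
    ext j
    simp only [Finset.mem_Iic, Finset.mem_filter, Finset.mem_univ, true_and, Fin.le_def]
  have hWmono : ∀ σ, Monotone (W σ) := by
    intro σ m n hmn
    apply Finset.sum_le_sum_of_subset_of_nonneg
    · intro j hj
      simp only [Finset.mem_filter, Finset.mem_univ, true_and] at hj ⊢
      exact hj.trans hmn
    · intro j _ _; exact hw _
  have hWnonneg : ∀ σ n, 0 ≤ W σ n := fun σ n => Finset.sum_nonneg fun _ _ => hw _
  have had : ∀ (σ : Equiv.Perm (Fin N)) (k : Fin N), (0:ℝ) ≤ 2 * d (σ k) := by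
    intro σ k; linarith [hd (σ k)]
  have hDind : ∀ (σ : Equiv.Perm (Fin N)) (w' : ℝ),
      Dthresh N d wt σ w' = ∑ k : Fin N, if w' ≤ W σ (k : ℕ) then 2 * d (σ k) else 0 := by
    intro σ w'
    rw [Dthresh, Finset.sum_filter]
    refine Finset.sum_congr rfl fun k _ => ?_
    rw [hIic]
  -- c is nonnegative
  have hc0 : 0 ≤ c := by
    have hT : ∀ σ : Equiv.Perm (Fin N), Dthresh N d wt σ (-1) = ∑ v, 2 * d v := by
      intro σ
      rw [hDind]
      rw [show (∑ v, 2 * d v) = ∑ k, 2 * d (σ k) from (Equiv.sum_comp σ (fun v => 2 * d v)).symm]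
      refine Finset.sum_congr rfl fun k _ => ?_
      rw [if_pos (le_trans (by norm_num) (hWnonneg σ k))]
    have hS : (0:ℝ) < ∑ v : Fin N, 2 * d v := by
      haveI : Nonempty (Fin N) := Fin.pos_iff_nonempty.mp hN
      exact Finset.sum_pos (fun v _ => by linarith [hd v]) Finset.univ_nonempty
    have h := hc (-1)
    rw [hT, hT] at h
    nlinarith
  set F : ℕ → ℝ := fun n => f (W π n) with hF
  have hFincr : ∀ i, 0 ≤ F (i + 1) - F i :=
    fun i => sub_nonneg.mpr (hf (hWmono π (Nat.le_succ i)))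
  have hF0 : ∀ n, 0 ≤ F n := fun n => hf0 _
  set E : Equiv.Perm (Fin N) → ℝ := fun σ =>
    F 0 * Dthresh N d wt σ (W π 0) +
      ∑ i ∈ Finset.range (N - 1), (F (i + 1) - F i) * Dthresh N d wt σ (W π (i + 1)) with hE
  -- E as a single sum over k
  have hEeq : ∀ σ : Equiv.Perm (Fin N), E σ = ∑ k : Fin N,
      ((if W π 0 ≤ W σ (k : ℕ) then F 0 else 0)
        + ∑ i ∈ Finset.range (N - 1),
            (if W π (i + 1) ≤ W σ (k : ℕ) then F (i + 1) - F i else 0))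
        * (2 * d (σ k)) := by
    intro σ
    rw [hE]
    simp only [hDind, Finset.mul_sum]
    rw [Finset.sum_comm]
    rw [← Finset.sum_add_distrib]
    refine Finset.sum_congr rfl fun k _ => ?_
    rw [add_mul, Finset.sum_mul]
    congr 1
    · split_ifs <;> ring
    · exact Finset.sum_congr rfl fun i _ => by split_ifs <;> ring
  -- T(π) ≤ E π
  have hTπ : Tstar N d wt f π ≤ E π := by
    rw [hEeq π, Tstar]
    refine Finset.sum_le_sum fun k _ => ?_
    rw [hIic, mul_comm (2 * d (π k))]
    refine mul_le_mul_of_nonneg_right ?_ (had π k)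
    rw [if_pos (hWmono π (Nat.zero_le _))]
    have h1 : ∑ i ∈ Finset.range (k : ℕ), (F (i + 1) - F i)
        ≤ ∑ i ∈ Finset.range (N - 1),
            (if W π (i + 1) ≤ W π (k : ℕ) then F (i + 1) - F i else 0) := by
      have hsub : Finset.range (k : ℕ) ⊆ Finset.range (N - 1) := by
        apply Finset.range_subset_range.mpr
        have := k.isLt
        omega
      calc ∑ i ∈ Finset.range (k : ℕ), (F (i + 1) - F i)
          = ∑ i ∈ Finset.range (k : ℕ),
              (if W π (i + 1) ≤ W π (k : ℕ) then F (i + 1) - F i else 0) := by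
            refine Finset.sum_congr rfl fun i hi => ?_
            rw [if_pos (hWmono π (by simp at hi; omega))]
        _ ≤ _ := by
            refine Finset.sum_le_sum_of_subset_of_nonneg hsub fun i _ _ => ?_
            split_ifs with h
            · exact hFincr i
            · exact le_refl 0
    have htel : ∑ i ∈ Finset.range (k : ℕ), (F (i + 1) - F i) = F (k : ℕ) - F 0 :=
      Finset.sum_range_sub F (k : ℕ)
    show f (W π (k : ℕ)) ≤ _
    have : f (W π (k : ℕ)) = F 0 + (F (k : ℕ) - F 0) := by rw [hF]; ring
    rw [this, ← htel]
    linarith [h1]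
  -- E π ≤ c * E πstar
  have hEc : E π ≤ c * E πstar := by
    rw [hE]
    simp only []
    rw [mul_add, Finset.mul_sum]
    refine add_le_add ?_ (Finset.sum_le_sum fun i _ => ?_)
    · calc F 0 * Dthresh N d wt π (W π 0)
          ≤ F 0 * (c * Dthresh N d wt πstar (W π 0)) :=
            mul_le_mul_of_nonneg_left (hc _) (hF0 0)
        _ = c * (F 0 * Dthresh N d wt πstar (W π 0)) := by ring
    · calc (F (i + 1) - F i) * Dthresh N d wt π (W π (i + 1))
          ≤ (F (i + 1) - F i) * (c * Dthresh N d wt πstar (W π (i + 1))) :=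
            mul_le_mul_of_nonneg_left (hc _) (hFincr i)
        _ = c * ((F (i + 1) - F i) * Dthresh N d wt πstar (W π (i + 1))) := by ring
  -- E πstar ≤ T(πstar)
  have hEstar : E πstar ≤ Tstar N d wt f πstar := by
    rw [hEeq πstar, Tstar]
    refine Finset.sum_le_sum fun k _ => ?_
    rw [hIic, mul_comm (2 * d (πstar k))]
    refine mul_le_mul_of_nonneg_right ?_ (had πstar k)
    set w := W πstar (k : ℕ) with hwdef
    by_cases h0 : W π 0 ≤ w
    · set m := Nat.findGreatest (fun i => W π i ≤ w) (N - 1) with hm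
      have hmle : m ≤ N - 1 := Nat.findGreatest_le _
      have hPm : W π m ≤ w := by
        rw [hm]
        exact Nat.findGreatest_spec (P := fun i => W π i ≤ w) (Nat.zero_le _) h0
      rw [if_pos h0]
      have hsum : ∑ i ∈ Finset.range (N - 1),
          (if W π (i + 1) ≤ w then F (i + 1) - F i else 0)
          = ∑ i ∈ Finset.range m, (F (i + 1) - F i) := by
        have hiff : ∀ i ∈ Finset.range (N - 1),
            (if W π (i + 1) ≤ w then F (i + 1) - F i else 0)
              = (if i + 1 ≤ m then F (i + 1) - F i else 0) := by
          intro i hi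
          simp only [Finset.mem_range] at hi
          refine if_congr ?_ rfl rfl
          constructor
          · intro h; exact Nat.le_findGreatest (by omega) h
          · intro h; exact le_trans (hWmono π h) hPm
        rw [Finset.sum_congr rfl hiff, ← Finset.sum_filter]
        congr 1
        ext i
        simp only [Finset.mem_filter, Finset.mem_range]
        omega
      rw [hsum, Finset.sum_range_sub F m]
      have : F 0 + (F m - F 0) = f (W π m) := by rw [hF]; ring
      rw [this]
      exact hf hPm
    · rw [if_neg h0]
      have hz : ∑ i ∈ Finset.range (N - 1),
          (if W π (i + 1) ≤ w then F (i + 1) - F i else 0) = 0 := by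
        refine Finset.sum_eq_zero fun i _ => ?_
        rw [if_neg]
        intro h
        exact h0 (le_trans (hWmono π (Nat.zero_le _)) h)
      rw [hz]
      simpa using hf0 w
  have hTstarnn : 0 ≤ Tstar N d wt f πstar := by
    rw [Tstar]
    exact Finset.sum_nonneg fun k _ => mul_nonneg (had πstar k) (hf0 _)
  have h1 : Tstar N d wt f π ≤ c * Tstar N d wt f πstar :=
    le_trans hTπ (le_trans hEc (mul_le_mul_of_nonneg_left hEstar hc0))
  nlinarith
end
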